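/- arXiv:2410.07449 — 9 statements merged into one kernel-verified Lean document; each statement's English description precedes it below -/
import Mathlib

section
/- For all natural numbers k, n, m, r with r ≤ m ≤ n and k ≤ n−m, one has ∑_{s=1}^{m+1} (s/(s+k)) · (−1)^s · C(m+1, s) · C(n−m+s, r) = − C(n−m−k, r) / C(m+k+1, k). -/
open Finset

private lemma alt_step (M : ℕ) (f : ℕ → ℚ) :
    ∑ s ∈ range (M+2), (-1:ℚ)^s * ((M+1).choose s) * f s
      = (∑ s ∈ range (M+1), (-1:ℚ)^s * (M.choose s) * f s)
        - ∑ s ∈ range (M+1), (-1:ℚ)^s * (M.choose s) * f (s+1) := by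
  have h1 := Finset.sum_range_succ' (fun s => (-1:ℚ)^s * ((M+1).choose s) * f s) (M+1)
  rw [h1]
  have h2 := Finset.sum_range_succ' (fun s => (-1:ℚ)^s * (M.choose s) * f s) M
  rw [h2]
  have hsplit : ∑ s ∈ range (M+1), (-1:ℚ)^(s+1) * ((M+1).choose (s+1)) * f (s+1)
      = (∑ s ∈ range (M+1), -((-1:ℚ)^s * (M.choose s) * f (s+1)))
        + ∑ s ∈ range (M+1), (-1:ℚ)^(s+1) * (M.choose (s+1)) * f (s+1) := by
    rw [← Finset.sum_add_distrib]
    apply Finset.sum_congr rfl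
    intro s _
    rw [Nat.choose_succ_succ]
    push_cast
    ring
  rw [hsplit, Finset.sum_neg_distrib,
    Finset.sum_range_succ (fun s => (-1:ℚ)^(s+1) * (M.choose (s+1)) * f (s+1)) M]
  simp [Nat.choose_succ_self]
  ring

private lemma lemB : ∀ (M a t : ℕ), t < M →
    ∑ s ∈ range (M+1), (-1:ℚ)^s * (M.choose s) * ((s+a).choose t) = 0 := by
  intro M
  induction M with
  | zero => intro a t ht; omega
  | succ M ih =>
    intro a t ht
    rw [show M + 1 + 1 = M + 2 from rfl, alt_step M (fun s => ((s+a).choose t : ℚ))]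
    rw [← Finset.sum_sub_distrib]
    match t with
    | 0 => simp
    | t+1 =>
      have key : ∀ s : ℕ, (-1:ℚ)^s * (M.choose s) * ((s+a).choose (t+1))
          - (-1:ℚ)^s * (M.choose s) * ((s+1+a).choose (t+1))
          = -((-1:ℚ)^s * (M.choose s) * ((s+a).choose t)) := by
        intro s
        have : (s+1+a).choose (t+1) = (s+a).choose t + (s+a).choose (t+1) := by
          rw [show s+1+a = (s+a)+1 by ring, Nat.choose_succ_succ]
        rw [this]
        push_cast
        ring
      rw [Finset.sum_congr rfl (fun s _ => key s), Finset.sum_neg_distrib,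
        ih a t (by omega), neg_zero]

private lemma lemA : ∀ (M k : ℕ), 1 ≤ k →
    ∑ s ∈ range (M+1), (-1:ℚ)^s * (M.choose s) * (1/((s:ℚ)+k)) = 1/((k:ℚ) * ((M+k).choose k)) := by
  intro M
  induction M with
  | zero => intro k hk; simp
  | succ M ih =>
    intro k hk
    rw [show M + 1 + 1 = M + 2 from rfl, alt_step M (fun s => 1/((s:ℚ)+k))]
    have h2 : (∑ s ∈ range (M+1), (-1:ℚ)^s * (M.choose s) * (1/((↑(s+1):ℚ)+k)))
        = 1/(((k+1:ℕ):ℚ) * ((M+(k+1)).choose (k+1))) := by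
      rw [← ih (k+1) (by omega)]
      apply Finset.sum_congr rfl
      intro s _
      push_cast
      ring_nf
    rw [h2, ih k hk]
    have f1 : (M+k+1) * (M+k).choose k = (M+k+1).choose (k+1) * (k+1) :=
      Nat.add_one_mul_choose_eq (M+k) k
    have f2 : (M+k+1).choose (k+1) * (k+1) = (M+k+1).choose k * (M+1) := by
      rw [Nat.choose_succ_right_eq]; congr 1; omega
    rw [show M + (k+1) = M + k + 1 by omega, show M + 1 + k = M + k + 1 by omega]
    have q1 : ((M:ℚ)+k+1) * ((M+k).choose k : ℚ) = ((M+k+1).choose (k+1) : ℚ) * ((k:ℚ)+1) := by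
      exact_mod_cast f1
    have q2 : ((M+k+1).choose (k+1) : ℚ) * ((k:ℚ)+1) = ((M+k+1).choose k : ℚ) * ((M:ℚ)+1) := by
      exact_mod_cast f2
    set a : ℚ := ((M+k).choose k : ℚ) with ha
    set b : ℚ := ((M+k+1).choose (k+1) : ℚ) with hb
    set c : ℚ := ((M+k+1).choose k : ℚ) with hc
    have p1 : (0:ℚ) < a := by rw [ha]; exact_mod_cast Nat.choose_pos (by omega)
    have p2 : (0:ℚ) < b := by rw [hb]; exact_mod_cast Nat.choose_pos (by omega)
    have p3 : (0:ℚ) < c := by rw [hc]; exact_mod_cast Nat.choose_pos (by omega)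
    have hk0 : (0:ℚ) < (k:ℚ) := by exact_mod_cast hk
    push_cast
    field_simp
    linear_combination (-c)*q1 + (-a)*q2

theorem stmt6 (k n m r : ℕ) (h1 : r ≤ m) (h2 : m ≤ n) (h3 : k ≤ n - m) :
    ∑ s ∈ Finset.Icc 1 (m + 1),
      ((s : ℚ) / ((s : ℚ) + k)) * (-1) ^ s * ((m + 1).choose s : ℚ) * ((n - m + s).choose r : ℚ) =
      -((n - m - k).choose r : ℚ) / ((m + k + 1).choose k : ℚ) := by
  set N := n - m with hN
  have hIcc : Finset.Icc 1 (m+1) = (Finset.range (m+2)).erase 0 := by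
    ext x; simp [Nat.lt_succ_iff]; omega
  rw [hIcc, Finset.sum_erase _ (by simp)]
  rcases Nat.eq_zero_or_pos k with hk | hk
  · subst hk
    have hB := lemB (m+1) N r (by omega)
    rw [Finset.sum_range_succ' _ (m+1)] at hB
    rw [show m + 2 = (m+1)+1 from rfl, Finset.sum_range_succ' _ (m+1)]
    have congr1 : ∀ s ∈ range (m+1),
        ((↑(s+1) : ℚ) / ((↑(s+1):ℚ) + ((0:ℕ):ℚ))) * (-1)^(s+1) * ((m+1).choose (s+1) : ℚ) * ((N+(s+1)).choose r : ℚ)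
        = (-1:ℚ)^(s+1) * ((m+1).choose (s+1)) * (((s+1)+N).choose r) := by
      intro s _
      have : ((↑(s+1):ℚ)) / ((↑(s+1):ℚ) + ((0:ℕ):ℚ)) = 1 := by
        push_cast
        rw [add_zero, div_self]
        positivity
      rw [this, show N+(s+1) = (s+1)+N by omega]
      ring
    rw [Finset.sum_congr rfl congr1]
    simp only [Nat.cast_zero, zero_div, zero_mul, mul_zero, add_zero, Nat.choose_zero_right,
      Nat.sub_zero, Nat.cast_one]
    simp only [pow_zero, Nat.choose_zero_right, Nat.cast_one, one_mul, zero_add] at hB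
    rw [div_one]
    linarith
  · obtain ⟨k', rfl⟩ : ∃ k', k = k' + 1 := ⟨k - 1, by omega⟩
    set K : ℕ := k' + 1 with hK
    -- step 1: split weight
    have step1 : ∀ s ∈ range (m+2),
        ((s:ℚ) / ((s:ℚ) + (K:ℚ))) * (-1)^s * ((m+1).choose s : ℚ) * ((N+s).choose r : ℚ)
        = (-1:ℚ)^s * ((m+1).choose s) * (((s+N).choose r : ℚ))
          - (K:ℚ) * ((-1:ℚ)^s * ((m+1).choose s) * (((s+N).choose r : ℚ) * (1/((s:ℚ)+(K:ℚ))))) := by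
      intro s _
      have hpos : (0:ℚ) < (s:ℚ) + (K:ℚ) := by
        have : (0:ℚ) < (K:ℚ) := by exact_mod_cast Nat.succ_pos k'
        positivity
      rw [show N+s = s+N by omega]
      field_simp
      ring
    rw [Finset.sum_congr rfl step1, Finset.sum_sub_distrib, lemB (m+1) N r (by omega),
      ← Finset.mul_sum, zero_sub]
    -- step 2: evaluate T
    have vdm : ∀ s : ℕ, ((s+N).choose r : ℚ)
        = ∑ j ∈ range (r+1), ((N-K).choose j : ℚ) * ((K+s).choose (r-j) : ℚ) := by
      intro s
      have hsplit : s + N = (N-K) + (K+s) := by omega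
      rw [hsplit, Nat.add_choose_eq, Finset.Nat.sum_antidiagonal_eq_sum_range_succ_mk]
      push_cast
      rfl
    have hT : ∑ s ∈ range (m+2), (-1:ℚ)^s * ((m+1).choose s) * (((s+N).choose r : ℚ) * (1/((s:ℚ)+(K:ℚ))))
        = ((N-K).choose r : ℚ) * (1/((K:ℚ) * (((m+1)+K).choose K : ℚ))) := by
      have swap1 : ∀ s ∈ range (m+2),
          (-1:ℚ)^s * ((m+1).choose s) * (((s+N).choose r : ℚ) * (1/((s:ℚ)+(K:ℚ))))
          = ∑ j ∈ range (r+1), ((N-K).choose j : ℚ) *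
              ((-1:ℚ)^s * ((m+1).choose s) * (((K+s).choose (r-j) : ℚ) * (1/((s:ℚ)+(K:ℚ))))) := by
        intro s _
        rw [vdm s, Finset.sum_mul, Finset.mul_sum]
        apply Finset.sum_congr rfl
        intro j _
        ring
      rw [Finset.sum_congr rfl swap1, Finset.sum_comm]
      have inner : ∀ j ∈ range (r+1),
          ∑ s ∈ range (m+2), ((N-K).choose j : ℚ) *
              ((-1:ℚ)^s * ((m+1).choose s) * (((K+s).choose (r-j) : ℚ) * (1/((s:ℚ)+(K:ℚ)))))
          = ((N-K).choose j : ℚ) *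
              ∑ s ∈ range (m+2), (-1:ℚ)^s * ((m+1).choose s) * (((K+s).choose (r-j) : ℚ) * (1/((s:ℚ)+(K:ℚ)))) := by
        intro j _
        rw [Finset.mul_sum]
      rw [Finset.sum_congr rfl inner, Finset.sum_range_succ]
      -- j = r term
      have lastterm : ∑ s ∈ range (m+2), (-1:ℚ)^s * ((m+1).choose s) * (((K+s).choose (r-r) : ℚ) * (1/((s:ℚ)+(K:ℚ))))
          = 1/((K:ℚ) * (((m+1)+K).choose K : ℚ)) := by
        rw [← lemA (m+1) K (by omega)]
        apply Finset.sum_congr rfl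
        intro s _
        rw [Nat.sub_self, Nat.choose_zero_right]
        push_cast
        ring
      rw [lastterm]
      -- j < r terms vanish
      have vanish : ∀ j ∈ range r, ((N-K).choose j : ℚ) *
          ∑ s ∈ range (m+2), (-1:ℚ)^s * ((m+1).choose s) * (((K+s).choose (r-j) : ℚ) * (1/((s:ℚ)+(K:ℚ))))
          = 0 := by
        intro j hj
        rw [Finset.mem_range] at hj
        set t : ℕ := r - j - 1 with htdef
        have hrj : r - j = t + 1 := by omega
        have perterm : ∀ s ∈ range (m+2),
            (-1:ℚ)^s * ((m+1).choose s) * (((K+s).choose (r-j) : ℚ) * (1/((s:ℚ)+(K:ℚ))))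
            = ((-1:ℚ)^s * ((m+1).choose s) * (((s+k').choose t : ℚ))) * (1/((t:ℚ)+1)) := by
          intro s _
          have hnat : (s+k'+1) * (s+k').choose t = (s+k'+1).choose (t+1) * (t+1) :=
            Nat.add_one_mul_choose_eq (s+k') t
          have hq : ((s:ℚ)+k'+1) * ((s+k').choose t : ℚ) = ((s+k'+1).choose (t+1) : ℚ) * ((t:ℚ)+1) := by
            exact_mod_cast hnat
          rw [hrj, show K + s = s+k'+1 by omega]
          have hd1 : ((s:ℚ)+(K:ℚ)) = (s:ℚ)+k'+1 := by rw [hK]; push_cast; ring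
          rw [hd1]
          have hne1 : ((s:ℚ)+(k':ℚ)+1) ≠ 0 := by positivity
          have hne2 : ((t:ℚ)+1) ≠ 0 := by positivity
          field_simp
          linear_combination (-(((m+1).choose s : ℕ):ℚ)) * hq
        rw [Finset.sum_congr rfl perterm, ← Finset.sum_mul, lemB (m+1) k' t (by omega),
          zero_mul, mul_zero]
      rw [Finset.sum_eq_zero vanish, zero_add]
    rw [hT]
    -- final algebra
    have hKpos : (0:ℚ) < (K:ℚ) := by exact_mod_cast Nat.succ_pos k'
    have hCpos : (0:ℚ) < (((m+1)+K).choose K : ℚ) := by exact_mod_cast Nat.choose_pos (by omega)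
    rw [show m + K + 1 = (m+1) + K by omega]
    field_simp
end

section
/- Fix N ∈ ℕ, complex numbers a_{i,j} for 1 ≤ i ≤ N, 0 ≤ j ≤ i, and let a_i(x) = ∑_{j=0}^{i} a_{i,j} x^j. Define δ_m^{(k)} = ∑_{i=k}^{min(m,N)} C(m,i) · i! · a_{i,i−k} for all m ∈ ℕ, k ≥ 0. Suppose for every n ∈ ℕ there is a monic polynomial P_n(x) = ∑_{i=0}^{n} b_{n,i} x^i of degree n and λ_n ∈ ℂ with ∑_{i=1}^{N} a_i(x) · P_n^{(i)}(x) = λ_n · P_n(x), and suppose the eigenvalues λ_0, λ_1, λ_2, … are pairwise distinct. Then for every n ∈ ℕ and every i with 1 ≤ i ≤ n, the coefficient b_{n,n−i} equals the determinant of the i×i upper Hessenberg matrix H whose entries (with rows and columns indexed from 1 to i) are: H_{j,l} = δ_{n−j+1}^{(l−j+1)} / (λ_n − λ_{n−l}) for l ≥ j, H_{j,j−1} = −1 for 2 ≤ j ≤ i, and H_{j,l} = 0 for l < j−1. -/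
open Finset Polynomial

/-- The polynomial coefficient `a_i(x) = ∑_{j=0}^{i} a_{i,j} x^j` of the Bochner operator. -/
noncomputable def apoly (A : ℕ → ℕ → ℂ) (i : ℕ) : Polynomial ℂ :=
  ∑ j ∈ range (i + 1), C (A i j) * X ^ j

/-- `δ_n^{(k)} = ∑_{i=k}^{min(n,N)} C(n,i) i! a_{i,i-k}`. -/
noncomputable def delta (N : ℕ) (A : ℕ → ℕ → ℂ) (n k : ℕ) : ℂ :=
  ∑ i ∈ Icc k (min n N), (n.choose i : ℂ) * (i.factorial : ℂ) * A i (i - k)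



lemma hess_det (g : ℕ → ℕ → ℂ) (c : ℕ → ℂ)
    (hsub : ∀ l, g (l+1) l = -1)
    (hlow : ∀ j l, l + 1 < j → g j l = 0)
    (hc0 : c 0 = 1) (m : ℕ)
    (hrec : ∀ l, 1 ≤ l → l ≤ m + 1 → c l = ∑ j ∈ range l, g j (l-1) * c j) :
    Matrix.det (Matrix.of fun j l : Fin (m+1) => g j l) = c (m+1) := by
  set M : Matrix (Fin (m+1)) (Fin (m+1)) ℂ := Matrix.of fun j l : Fin (m+1) => g j l with hM
  have hv : (∑ k : Fin (m+1), c (k:ℕ) • M k)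
      = fun l : Fin (m+1) => if (l:ℕ) = m then c (m+1) else 0 := by
    funext l
    have hsum : (∑ k : Fin (m+1), c (k:ℕ) • M k) l
        = ∑ k ∈ range (m+1), c k * g k (l:ℕ) := by
      rw [Finset.sum_apply]
      rw [← Fin.sum_univ_eq_sum_range (fun k => c k * g k (l:ℕ)) (m+1)]
      rfl
    rw [hsum]
    by_cases hl : (l:ℕ) = m
    · rw [if_pos hl, hl]
      rw [hrec (m+1) (by omega) (by omega)]
      simp [mul_comm]
    · rw [if_neg hl]
      have hlm : (l:ℕ) < m := lt_of_le_of_ne (Nat.lt_succ_iff.mp l.isLt) hl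
      have hext : ∑ k ∈ range ((l:ℕ)+2), c k * g k (l:ℕ)
          = ∑ k ∈ range (m+1), c k * g k (l:ℕ) := by
        apply Finset.sum_subset
        · apply Finset.range_subset_range.mpr; omega
        · intro x hx hx'
          simp only [Finset.mem_range, not_lt] at hx hx'
          rw [hlow x (l:ℕ) (by omega), mul_zero]
      rw [← hext, Finset.sum_range_succ, hsub]
      have := hrec ((l:ℕ)+1) (by omega) (by omega)
      simp only [Nat.add_sub_cancel] at this
      rw [show ∑ k ∈ range ((l:ℕ)+1), c k * g k (l:ℕ)
          = ∑ k ∈ range ((l:ℕ)+1), g k (l:ℕ) * c k from Finset.sum_congr rfl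
            (fun _ _ => mul_comm _ _), ← this]
      ring
  have hdet1 : M.det = (M.updateRow 0 (∑ k : Fin (m+1), c (k:ℕ) • M k)).det := by
    rw [Matrix.det_updateRow_sum M 0 (fun k => c (k:ℕ))]
    simp [hc0]
  rw [hdet1, hv, Matrix.det_succ_row_zero]
  rw [Finset.sum_eq_single (Fin.last m)]
  · have hrow : (M.updateRow 0 fun l : Fin (m+1) => if (l:ℕ) = m then c (m+1) else 0) 0
        (Fin.last m) = c (m+1) := by
      rw [Matrix.updateRow_self]; simp
    rw [hrow]
    have hD : ((M.updateRow 0 fun l : Fin (m+1) => if (l:ℕ) = m then c (m+1) else 0).submatrix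
        Fin.succ (Fin.last m).succAbove)
        = Matrix.of (fun r c' : Fin m => g ((r:ℕ)+1) (c':ℕ)) := by
      funext r c'
      rw [Matrix.submatrix_apply, Fin.succAbove_last, Matrix.updateRow_ne (Fin.succ_ne_zero r)]
      simp [hM]
    rw [hD]
    have htri : Matrix.BlockTriangular (Matrix.of fun r c' : Fin m => g ((r:ℕ)+1) (c':ℕ)) id := by
      intro r c' hrc
      exact hlow _ _ (by have : (c':ℕ) < r := hrc; omega)
    rw [Matrix.det_of_upperTriangular htri]
    have hprod : ∏ r : Fin m, (Matrix.of fun r c' : Fin m => g ((r:ℕ)+1) (c':ℕ)) r r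
        = (-1:ℂ)^m := by
      calc ∏ r : Fin m, (Matrix.of fun r c' : Fin m => g ((r:ℕ)+1) (c':ℕ)) r r
          = ∏ _r : Fin m, (-1:ℂ) := Finset.prod_congr rfl (fun r _ => hsub (r:ℕ))
        _ = (-1:ℂ)^m := by simp
    rw [hprod, Fin.val_last]
    have hone : ((-1:ℂ))^m * ((-1:ℂ))^m = 1 := by
      rw [← pow_add]; exact Even.neg_one_pow ⟨m, rfl⟩
    linear_combination c (m+1) * hone
  · intro j _ hj
    have : ((M.updateRow 0 fun l : Fin (m+1) => if (l:ℕ) = m then c (m+1) else 0) 0 j) = 0 := by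
      rw [Matrix.updateRow_self]
      simp only [ite_eq_right_iff]
      intro h; exact absurd (Fin.ext h : j = Fin.last m) hj
    rw [this, mul_zero, zero_mul]
  · simp
lemma delta_ext (N : ℕ) (A : ℕ → ℕ → ℂ) (n k : ℕ) :
    delta N A n k = ∑ i ∈ Icc k N, ((n.descFactorial i : ℕ) : ℂ) * A i (i - k) := by
  rw [delta]
  rw [Finset.sum_subset (Finset.Icc_subset_Icc_right (min_le_right n N))]
  · exact Finset.sum_congr rfl fun i _ => by
      rw [Nat.descFactorial_eq_factorial_mul_choose]; push_cast; ring
  · intro i hi hi'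
    simp only [Finset.mem_Icc] at hi hi'
    have : n < i := by omega
    rw [Nat.choose_eq_zero_of_lt this]
    simp

lemma coeff_op (A : ℕ → ℕ → ℂ) (q : Polynomial ℂ) (i m : ℕ) :
    (apoly A i * (derivative^[i] q)).coeff m
      = ∑ j ∈ range (i+1), A i j *
          (if j ≤ m then (((m - j + i).descFactorial i : ℕ) : ℂ) * q.coeff (m - j + i) else 0) := by
  rw [apoly, Finset.sum_mul, finset_sum_coeff]
  refine Finset.sum_congr rfl fun j _ => ?_
  rw [mul_assoc, mul_comm (X ^ j) _, coeff_C_mul, coeff_mul_X_pow']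
  congr 1
  by_cases hj : j ≤ m
  · rw [if_pos hj, if_pos hj, Polynomial.coeff_iterate_derivative, nsmul_eq_mul]
  · rw [if_neg hj, if_neg hj]

lemma key (N : ℕ) (A : ℕ → ℕ → ℂ) (lam : ℕ → ℂ) (P : ℕ → Polynomial ℂ)
    (heq : ∀ n, ∑ i ∈ Icc 1 N, apoly A i * (Polynomial.derivative^[i] (P n)) = C (lam n) * P n)
    (n m : ℕ) :
    delta N A m 0 * (P n).coeff m + ∑ k ∈ Icc 1 N, delta N A (m+k) k * (P n).coeff (m+k)
      = (lam n + A 0 0) * (P n).coeff m := by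
  have h : (∑ i ∈ Icc 1 N, apoly A i * (Polynomial.derivative^[i] (P n))).coeff m
      = lam n * (P n).coeff m := by rw [heq n, coeff_C_mul]
  rw [finset_sum_coeff] at h
  -- rewrite each summand
  have h2 : ∑ i ∈ Icc 1 N, ∑ k ∈ range (i+1),
      A i (i-k) * (((m + k).descFactorial i : ℕ) : ℂ) * (P n).coeff (m+k)
      = lam n * (P n).coeff m := by
    rw [← h]
    refine Finset.sum_congr rfl fun i _ => ?_
    rw [coeff_op]
    rw [← Finset.sum_range_reflect (fun j => A i j *
      (if j ≤ m then (((m - j + i).descFactorial i : ℕ) : ℂ) * (P n).coeff (m - j + i) else 0))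
      (i+1)]
    refine Finset.sum_congr rfl fun k hk => ?_
    simp only [Finset.mem_range] at hk
    have hki : k ≤ i := by omega
    simp only [Nat.add_sub_cancel]
    by_cases hc : i - k ≤ m
    · rw [if_pos hc, show m - (i - k) + i = m + k by omega]
      ring
    · rw [if_neg hc, show ((m+k).descFactorial i : ℕ) = 0 from
        Nat.descFactorial_eq_zero_iff_lt.mpr (by omega)]
      push_cast
      ring
  -- swap the sums
  have h3 : ∑ i ∈ Icc 1 N, ∑ k ∈ range (i+1),
      A i (i-k) * (((m + k).descFactorial i : ℕ) : ℂ) * (P n).coeff (m+k)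
      = ∑ k ∈ range (N+1), ∑ i ∈ Icc 1 N, (if k ≤ i then
          A i (i-k) * (((m + k).descFactorial i : ℕ) : ℂ) * (P n).coeff (m+k) else 0) := by
    rw [Finset.sum_comm]
    refine Finset.sum_congr rfl fun i hi => ?_
    simp only [Finset.mem_Icc] at hi
    rw [← Finset.sum_filter]
    rw [show (range (N+1)).filter (fun k => k ≤ i) = range (i+1) by
      ext a; simp only [Finset.mem_filter, Finset.mem_range]; omega]
  rw [h3] at h2
  -- evaluate inner sums
  have hk0 : ∑ i ∈ Icc 1 N, (if 0 ≤ i then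
      A i (i-0) * (((m + 0).descFactorial i : ℕ) : ℂ) * (P n).coeff (m+0) else 0)
      = (delta N A m 0 - A 0 0) * (P n).coeff m := by
    rw [delta_ext]
    rw [show Icc 0 N = insert 0 (Icc 1 N) by ext a; simp [Finset.mem_Icc]; omega]
    rw [Finset.sum_insert (by simp)]
    simp only [Nat.descFactorial_zero, Nat.sub_zero, Nat.add_zero, if_pos (Nat.zero_le _),
      Nat.cast_one, one_mul]
    rw [add_sub_cancel_left, Finset.sum_mul]
    exact Finset.sum_congr rfl fun i _ => by ring
  have hkpos : ∀ k ∈ Icc 1 N, ∑ i ∈ Icc 1 N, (if k ≤ i then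
      A i (i-k) * (((m + k).descFactorial i : ℕ) : ℂ) * (P n).coeff (m+k) else 0)
      = delta N A (m+k) k * (P n).coeff (m+k) := by
    intro k hk
    simp only [Finset.mem_Icc] at hk
    rw [← Finset.sum_filter,
      show (Icc 1 N).filter (fun i => k ≤ i) = Icc k N by
        ext a; simp only [Finset.mem_filter, Finset.mem_Icc]; omega,
      delta_ext, Finset.sum_mul]
    exact Finset.sum_congr rfl fun i _ => by ring
  rw [show range (N+1) = insert 0 (Icc 1 N) by ext a; simp [Finset.mem_Icc]; omega,
    Finset.sum_insert (by simp), hk0, Finset.sum_congr rfl hkpos] at h2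
  linear_combination h2

lemma eig (N : ℕ) (A : ℕ → ℕ → ℂ) (lam : ℕ → ℂ) (P : ℕ → Polynomial ℂ)
    (hmon : ∀ n, (P n).Monic) (hdeg : ∀ n, (P n).natDegree = n)
    (heq : ∀ n, ∑ i ∈ Icc 1 N, apoly A i * (Polynomial.derivative^[i] (P n)) = C (lam n) * P n)
    (n : ℕ) : delta N A n 0 = lam n + A 0 0 := by
  have h := key N A lam P heq n n
  have h1 : (P n).coeff n = 1 := by
    have := (hmon n).coeff_natDegree; rwa [hdeg n] at this
  rw [h1, Finset.sum_eq_zero (fun k hk => by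
    rw [Polynomial.coeff_eq_zero_of_natDegree_lt
      (by rw [hdeg]; have := (Finset.mem_Icc.mp hk).1; omega), mul_zero])] at h
  simpa using h

theorem stmt9 (N : ℕ) (A : ℕ → ℕ → ℂ) (lam : ℕ → ℂ) (P : ℕ → Polynomial ℂ)
    (hmon : ∀ n, (P n).Monic) (hdeg : ∀ n, (P n).natDegree = n)
    (heq : ∀ n, ∑ i ∈ Icc 1 N, apoly A i * (Polynomial.derivative^[i] (P n)) = C (lam n) * P n)
    (hdist : Function.Injective lam) :
    ∀ n i : ℕ, 1 ≤ i → i ≤ n →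
      (P n).coeff (n - i) =
        Matrix.det (fun j l : Fin i =>
          if (j : ℕ) ≤ (l : ℕ) then
            delta N A (n - (j : ℕ)) ((l : ℕ) - (j : ℕ) + 1) / (lam n - lam (n - ((l : ℕ) + 1)))
          else if (j : ℕ) = (l : ℕ) + 1 then (-1 : ℂ)
          else 0) := by
  intro n i hi1 hin
  obtain ⟨m, rfl⟩ : ∃ m, i = m + 1 := ⟨i - 1, by omega⟩
  set g : ℕ → ℕ → ℂ := fun a b =>
    if a ≤ b then delta N A (n - a) (b - a + 1) / (lam n - lam (n - (b + 1)))
    else if a = b + 1 then (-1 : ℂ) else 0 with hg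
  have hsub : ∀ l, g (l+1) l = -1 := by
    intro l; rw [hg]; simp only; rw [if_neg (by omega)]; simp
  have hlow : ∀ a b, b + 1 < a → g a b = 0 := by
    intro a b h; rw [hg]; simp only; rw [if_neg (by omega), if_neg (by omega)]
  have hc0 : (P n).coeff (n - 0) = 1 := by
    have h1 := (hmon n).coeff_natDegree
    rw [hdeg n] at h1
    rwa [Nat.sub_zero]
  have hrec : ∀ l, 1 ≤ l → l ≤ m + 1 →
      (P n).coeff (n - l) = ∑ j ∈ range l, g j (l-1) * (P n).coeff (n - j) := by
    intro l hl1 hl2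
    have hln : l ≤ n := by omega
    have hd : lam n - lam (n - l) ≠ 0 := sub_ne_zero.mpr fun h => by
      have := hdist h; omega
    have hrecl := key N A lam P heq n (n - l)
    rw [eig N A lam P hmon hdeg heq (n - l)] at hrecl
    have hT : ∑ k ∈ Icc 1 N, delta N A (n-l+k) k * (P n).coeff (n-l+k)
        = (lam n - lam (n-l)) * (P n).coeff (n-l) := by linear_combination hrecl
    have hU1 : ∑ k ∈ Icc 1 N, delta N A (n-l+k) k * (P n).coeff (n-l+k)
        = ∑ k ∈ Icc 1 (max N l), delta N A (n-l+k) k * (P n).coeff (n-l+k) := by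
      apply Finset.sum_subset (Finset.Icc_subset_Icc_right (le_max_left N l))
      intro k hk hk'
      simp only [Finset.mem_Icc] at hk hk'
      rw [delta, Finset.Icc_eq_empty (by omega), Finset.sum_empty, zero_mul]
    have hU2 : ∑ j ∈ range l, delta N A (n-j) (l-j) * (P n).coeff (n-j)
        = ∑ k ∈ Icc 1 (max N l), delta N A (n-l+k) k * (P n).coeff (n-l+k) := by
      rw [show ∑ j ∈ range l, delta N A (n-j) (l-j) * (P n).coeff (n-j)
          = ∑ k ∈ Icc 1 l, delta N A (n-l+k) k * (P n).coeff (n-l+k) from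
        Finset.sum_nbij' (fun j => l - j) (fun k => l - k)
          (fun a ha => by simp only [Finset.mem_range] at ha; simp only [Finset.mem_Icc]; omega)
          (fun a ha => by simp only [Finset.mem_Icc] at ha; simp only [Finset.mem_range]; omega)
          (fun a ha => by
            simp only [Finset.mem_range] at ha
            show l - (l - a) = a
            omega)
          (fun a ha => by
            simp only [Finset.mem_Icc] at ha
            show l - (l - a) = a
            omega)
          (fun a ha => by
            simp only [Finset.mem_range] at ha
            show delta N A (n-a) (l-a) * (P n).coeff (n-a)
              = delta N A (n-l+(l-a)) (l-a) * (P n).coeff (n-l+(l-a))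
            rw [show n - l + (l - a) = n - a by omega])]
      apply Finset.sum_subset (Finset.Icc_subset_Icc_right (le_max_right N l))
      intro k hk hk'
      simp only [Finset.mem_Icc] at hk hk'
      rw [Polynomial.coeff_eq_zero_of_natDegree_lt (by rw [hdeg]; omega), mul_zero]
    have hS : ∑ j ∈ range l, delta N A (n-j) (l-j) * (P n).coeff (n-j)
        = (lam n - lam (n-l)) * (P n).coeff (n-l) := by rw [hU2, ← hU1, hT]
    -- now compute the RHS of the goal
    have hRHS : ∑ j ∈ range l, g j (l-1) * (P n).coeff (n - j)
        = (∑ j ∈ range l, delta N A (n-j) (l-j) * (P n).coeff (n-j))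
            / (lam n - lam (n - l)) := by
      rw [Finset.sum_div]
      refine Finset.sum_congr rfl fun j hj => ?_
      simp only [Finset.mem_range] at hj
      rw [hg]
      simp only
      rw [if_pos (by omega : j ≤ l - 1),
        show l - 1 - j + 1 = l - j by omega, show l - 1 + 1 = l by omega,
        div_mul_eq_mul_div]
    rw [hRHS, hS, mul_div_cancel_left₀ _ hd]
  have := hess_det g (fun j => (P n).coeff (n - j)) hsub hlow hc0 m hrec
  exact this.symm
end

section
/- Fix N ∈ ℕ and complex numbers a_{i,j} for 1 ≤ i ≤ N, 0 ≤ j ≤ i. Define δ_n^{(k)} = ∑_{i=k}^{min(n,N)} C(n,i) · i! · a_{i,i−k} for all n ∈ ℕ, k ≥ 0. Then: (a) for every n ≥ N+1 and every k with 0 ≤ k ≤ N, δ_n^{(k)} = ∑_{i=k}^{N} (−1)^{N−i} · C(n,i) · C(n−i−1, N−i) · δ_i^{(k)}; and (b) δ_n^{(k)} = 0 whenever n ≥ k > N. -/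
open Finset

lemma keyS_base (M : ℕ) :
    ∑ m ∈ range (M+1), (-1:ℂ)^(M-m) * ((M+1).choose m) * ((M+1-m-1).choose (M-m)) = 1 := by
  have hc : ∀ m ∈ range (M+1),
      (-1:ℂ)^(M-m) * ((M+1).choose m) * ((M+1-m-1).choose (M-m))
        = (-1:ℂ)^M * ((-1:ℂ)^m * ((M+1).choose m)) := by
    intro m hm
    rw [mem_range] at hm
    have h1 : M + 1 - m - 1 = M - m := by omega
    rw [h1, Nat.choose_self, Nat.cast_one, mul_one]
    have hs : (-1:ℂ)^(M-m) * (-1:ℂ)^m = (-1:ℂ)^M := by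
      rw [← pow_add]; congr 1; omega
    have hsq : ((-1:ℂ)^m)*((-1:ℂ)^m) = 1 := by
      rw [← pow_add, ← two_mul, pow_mul]; simp
    calc (-1:ℂ)^(M-m) * ((M+1).choose m)
        = ((-1:ℂ)^(M-m) * (-1:ℂ)^m) * ((-1:ℂ)^m * ((M+1).choose m)) := by
          rw [show ((-1:ℂ)^(M-m) * (-1:ℂ)^m) * ((-1:ℂ)^m * ((M+1).choose m))
              = (-1:ℂ)^(M-m) * (((-1:ℂ)^m * (-1:ℂ)^m) * ((M+1).choose m)) by ring, hsq, one_mul]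
      _ = (-1:ℂ)^M * ((-1:ℂ)^m * ((M+1).choose m)) := by rw [hs]
  rw [sum_congr rfl hc, ← mul_sum]
  have h2 : ∑ m ∈ range (M+1+1), (-1:ℂ)^m * ((M+1).choose m) = 0 := by
    have h := Int.alternating_sum_range_choose (n := M+1)
    rw [if_neg (by omega)] at h
    have h' := congrArg (Int.cast : ℤ → ℂ) h
    push_cast at h'
    rw [← h']
  rw [sum_range_succ] at h2
  have h3 : ∑ m ∈ range (M+1), (-1:ℂ)^m * ((M+1).choose m) = -((-1:ℂ)^(M+1)) := by
    rw [Nat.choose_self, Nat.cast_one, mul_one] at h2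
    linear_combination h2
  rw [h3]
  have h4 : -(-1:ℂ)^(M+1) = (-1:ℂ)^M := by rw [pow_succ]; ring
  rw [h4, ← pow_add, ← two_mul, pow_mul]
  simp

lemma keyS_step (M t : ℕ) (ht : M + 1 ≤ t) :
    ∑ m ∈ range (M+1), (-1:ℂ)^(M-m) * ((t+1).choose m) * ((t+1-m-1).choose (M-m))
    = ∑ m ∈ range (M+1), (-1:ℂ)^(M-m) * (t.choose m) * ((t-m-1).choose (M-m)) := by
  set g : ℕ → ℂ := fun m => if m < M then (-1:ℂ)^(M-m) * (t.choose m) * ((t-m-1).choose (M-m-1)) else 0 with hg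
  have hterm : ∀ m ∈ range (M+1),
      (-1:ℂ)^(M-m) * ((t+1).choose m) * ((t+1-m-1).choose (M-m))
      = (-1:ℂ)^(M-m) * (t.choose m) * ((t-m-1).choose (M-m))
        + (g m - (if m = 0 then 0 else g (m-1))) := by
    intro m hm
    rw [mem_range] at hm
    rcases Nat.eq_zero_or_pos m with rfl | hm0
    · simp only [if_pos rfl, sub_zero]
      rcases Nat.eq_zero_or_pos M with rfl | hM0
      · simp [hg]
      · -- M > 0 : Pascal C(t,M) = C(t-1,M-1) + C(t-1,M)
        have hP : t.choose M = (t-1).choose (M-1) + (t-1).choose M := by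
          have h1 : t = (t-1) + 1 := by omega
          have h2 : M = (M-1) + 1 := by omega
          have h := Nat.choose_succ_succ (t-1) (M-1)
          rw [Nat.succ_eq_add_one, Nat.succ_eq_add_one, ← h1, ← h2] at h
          exact h
        simp only [hg, if_pos hM0]
        have h3 : t + 1 - 0 - 1 = t := by omega
        have h4 : t - 0 - 1 = t - 1 := by omega
        have h5 : M - 0 = M := by omega
        rw [h3, h4, h5, hP]
        push_cast [Nat.choose_zero_right]
        ring
    · rcases Nat.lt_or_ge m M with hmM | hmM
      · -- 0 < m < M
        have hgm : g m = (-1:ℂ)^(M-m) * (t.choose m) * ((t-m-1).choose (M-m-1)) := by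
          rw [hg]; simp [hmM]
        have hgm1 : g (m-1) = (-1:ℂ)^(M-m+1) * (t.choose (m-1)) * ((t-m).choose (M-m)) := by
          have e1 : M - (m-1) = M - m + 1 := by omega
          have e2 : t - (m-1) - 1 = t - m := by omega
          have e3 : M - (m-1) - 1 = M - m := by omega
          rw [hg]
          have e4 : M - m + 1 - 1 = M - m := by omega
          simp only [if_pos (show m - 1 < M by omega), e1, e2, e3, e4]
        have hP1 : (t+1).choose m = t.choose (m-1) + t.choose m := by
          have h2 : m = (m-1) + 1 := by omega
          have h := Nat.choose_succ_succ t (m-1)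
          rw [Nat.succ_eq_add_one, Nat.succ_eq_add_one, ← h2] at h
          exact h
        have hP2 : (t-m).choose (M-m) = (t-m-1).choose (M-m-1) + (t-m-1).choose (M-m) := by
          have h1 : t - m = (t-m-1) + 1 := by omega
          have h2 : M - m = (M-m-1) + 1 := by omega
          have h := Nat.choose_succ_succ (t-m-1) (M-m-1)
          rw [Nat.succ_eq_add_one, Nat.succ_eq_add_one, ← h1, ← h2] at h
          exact h
        rw [if_neg (by omega), hgm, hgm1]
        have h3 : t + 1 - m - 1 = t - m := by omega
        rw [h3, hP1, hP2]
        have hsgn : (-1:ℂ)^(M-m+1) = -(-1:ℂ)^(M-m) := by rw [pow_succ]; ring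
        rw [hsgn]
        push_cast
        ring
      · -- m = M ≥ 1
        have hmM' : m = M := by omega
        subst hmM'
        have hgm : g m = 0 := by rw [hg]; simp
        have hgm1 : g (m-1) = (-1:ℂ)^1 * (t.choose (m-1)) * ((t-m).choose 0) := by
          have e1 : m - (m-1) = 1 := by omega
          have e2 : t - (m-1) - 1 = t - m := by omega
          have e3 : m - (m-1) - 1 = 0 := by omega
          rw [hg]
          simp only [if_pos (show m - 1 < m by omega), e1, e2, e3]
        have hP1 : (t+1).choose m = t.choose (m-1) + t.choose m := by
          have h2 : m = (m-1) + 1 := by omega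
          have h := Nat.choose_succ_succ t (m-1)
          rw [Nat.succ_eq_add_one, Nat.succ_eq_add_one, ← h2] at h
          exact h
        rw [if_neg (by omega), hgm, hgm1]
        have h3 : t + 1 - m - 1 = t - m := by omega
        have h4 : m - m = 0 := by omega
        rw [h3, h4, hP1]
        simp only [Nat.choose_zero_right, Nat.cast_one, pow_zero, pow_one]
        push_cast
        ring
  rw [sum_congr rfl hterm, sum_add_distrib, sum_sub_distrib]
  have hA : ∑ m ∈ range (M+1), g m = ∑ m ∈ range M, g m := by
    rw [sum_range_succ, hg]; simp
  have hB : ∑ m ∈ range (M+1), (if m = 0 then (0:ℂ) else g (m-1)) = ∑ m ∈ range M, g m := by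
    rw [sum_range_succ']
    simp
  rw [hA, hB]
  ring

lemma keyS (M t : ℕ) (ht : M + 1 ≤ t) :
    ∑ m ∈ range (M+1), (-1:ℂ)^(M-m) * (t.choose m) * ((t-m-1).choose (M-m)) = 1 := by
  induction t with
  | zero => omega
  | succ t ih =>
    rcases Nat.lt_or_ge t (M+1) with h | h
    · have : t = M := by omega
      subst this
      exact keyS_base t
    · rw [keyS_step M t h]
      exact ih h

lemma key_s10 (n N j : ℕ) (hn : N + 1 ≤ n) (hj : j ≤ N) :
    ∑ i ∈ Icc j N, (-1:ℂ)^(N-i) * (n.choose i) * ((n-i-1).choose (N-i)) * (i.choose j)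
      = (n.choose j) := by
  have hstep : ∀ i ∈ Icc j N,
      (-1:ℂ)^(N-i) * (n.choose i) * ((n-i-1).choose (N-i)) * (i.choose j)
      = (n.choose j : ℂ) * ((-1:ℂ)^((N-j)-(i-j)) * (((n-j)).choose (i-j))
          * (((n-j)-(i-j)-1).choose ((N-j)-(i-j)))) := by
    intro i hi
    rw [mem_Icc] at hi
    have htri : n.choose i * i.choose j = n.choose j * (n-j).choose (i-j) :=
      Nat.choose_mul hi.1
    have e1 : (N-j)-(i-j) = N - i := by omega
    have e2 : (n-j)-(i-j)-1 = n - i - 1 := by omega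
    rw [e1, e2]
    have hc := congrArg (Nat.cast : ℕ → ℂ) htri
    push_cast at hc
    linear_combination ((-1:ℂ)^(N-i) * ((n-i-1).choose (N-i))) * hc
  rw [sum_congr rfl hstep, ← mul_sum]
  have hre : ∑ i ∈ Icc j N, ((-1:ℂ)^((N-j)-(i-j)) * ((n-j).choose (i-j))
        * (((n-j)-(i-j)-1).choose ((N-j)-(i-j))))
      = ∑ m ∈ range ((N-j)+1), ((-1:ℂ)^((N-j)-m) * ((n-j).choose m)
        * (((n-j)-m-1).choose ((N-j)-m))) := by
    apply Finset.sum_nbij' (fun i => i - j) (fun m => j + m)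
    · intro a ha; rw [mem_Icc] at ha; rw [mem_range]; omega
    · intro a ha; rw [mem_range] at ha; rw [mem_Icc]; omega
    · intro a ha; rw [mem_Icc] at ha; omega
    · intro a ha; rw [mem_range] at ha; omega
    · intro a ha; rfl
  rw [hre, keyS (N-j) (n-j) (by omega), mul_one]

theorem stmt10 (N : ℕ) (A : ℕ → ℕ → ℂ) :
    (∀ n, N + 1 ≤ n → ∀ k ≤ N,
        delta N A n k = ∑ i ∈ Icc k N,
          (-1 : ℂ) ^ (N - i) * (n.choose i : ℂ) * ((n - i - 1).choose (N - i) : ℂ) * delta N A i k) ∧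
    (∀ n k : ℕ, N < k → k ≤ n → delta N A n k = 0) := by
  constructor
  · intro n hn k hk
    have hRT : ∀ i ∈ Icc k N,
        (-1 : ℂ) ^ (N - i) * (n.choose i : ℂ) * ((n - i - 1).choose (N - i) : ℂ) * delta N A i k
        = ∑ l ∈ Icc k N, (if l ≤ i then
            (-1 : ℂ) ^ (N - i) * (n.choose i : ℂ) * ((n - i - 1).choose (N - i) : ℂ)
              * ((i.choose l : ℂ) * (l.factorial : ℂ) * A l (l - k)) else 0) := by
      intro i hi
      rw [mem_Icc] at hi
      have hfil : Finset.filter (fun l => l ≤ i) (Icc k N) = Icc k i := by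
        ext l; simp only [mem_filter, mem_Icc]; omega
      rw [sum_ite, sum_const_zero, add_zero, hfil]
      unfold delta
      rw [min_eq_left hi.2, mul_sum]
    rw [sum_congr rfl hRT, Finset.sum_comm]
    unfold delta
    rw [min_eq_right (by omega)]
    refine sum_congr rfl ?_
    intro l hl
    rw [mem_Icc] at hl
    have hfil : Finset.filter (fun i => l ≤ i) (Icc k N) = Icc l N := by
      ext i; simp only [mem_filter, mem_Icc]; omega
    rw [sum_ite, sum_const_zero, add_zero, hfil]
    have : ∀ i ∈ Icc l N,
        (-1 : ℂ) ^ (N - i) * (n.choose i : ℂ) * ((n - i - 1).choose (N - i) : ℂ)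
          * ((i.choose l : ℂ) * (l.factorial : ℂ) * A l (l - k))
        = ((-1 : ℂ) ^ (N - i) * (n.choose i : ℂ) * ((n - i - 1).choose (N - i) : ℂ)
          * (i.choose l : ℂ)) * ((l.factorial : ℂ) * A l (l - k)) := by
      intro i _; ring
    rw [sum_congr rfl this, ← sum_mul, key_s10 n N l hn hl.2]
    ring
  · intro n k hNk hkn
    unfold delta
    rw [Icc_eq_empty (by simp only [not_le]; omega), sum_empty]
end

section
/- Fix N ∈ ℕ and complex numbers a_{i,j} for 1 ≤ i ≤ N, 0 ≤ j ≤ i, and let a_i(x) = ∑_{j=0}^{i} a_{i,j} x^j. Suppose for every n ∈ ℕ there is a monic polynomial P_n of degree n and λ_n ∈ ℂ with ∑_{i=1}^{N} a_i(x) · P_n^{(i)}(x) = λ_n · P_n(x). Then for every n ≥ N+1, λ_n = ∑_{i=1}^{N} (−1)^{N−i} · C(n,i) · C(n−i−1, N−i) · λ_i. -/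
open Finset Polynomial

lemma neg_one_pow_sub' (M m : ℕ) (h : m ≤ M) : (-1 : ℂ) ^ (M - m) = (-1) ^ M * (-1) ^ m := by
  have h1 : (-1 : ℂ) ^ (M - m) * (-1) ^ m = (-1) ^ M := by
    rw [← pow_add]; congr 1; omega
  have h2 : (-1 : ℂ) ^ m * (-1) ^ m = 1 := by
    rw [← pow_add, ← two_mul, pow_mul]; norm_num
  calc (-1 : ℂ) ^ (M - m) = (-1) ^ (M - m) * ((-1) ^ m * (-1) ^ m) := by rw [h2, mul_one]
    _ = ((-1) ^ (M - m) * (-1) ^ m) * (-1) ^ m := by ring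
    _ = (-1) ^ M * (-1) ^ m := by rw [h1]

lemma alt_sum' (K : ℕ) (hK : K ≠ 0) :
    ∑ j ∈ range (K + 1), (-1 : ℂ) ^ (K - j) * (K.choose j : ℂ) = 0 := by
  have h : ∀ j ∈ range (K + 1), (-1 : ℂ) ^ (K - j) * (K.choose j : ℂ)
      = (-1 : ℂ) ^ K * ((-1) ^ j * (K.choose j : ℂ)) := by
    intro j hj
    rw [neg_one_pow_sub' K j (by simp at hj; omega)]; ring
  rw [Finset.sum_congr rfl h, ← Finset.mul_sum]
  have h2 := congrArg (fun z : ℤ => (z : ℂ)) (Int.alternating_sum_range_choose_of_ne hK)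
  push_cast at h2
  rw [h2, mul_zero]

lemma choose_helper (u j K : ℕ) (h : j ≤ K) :
    u.choose j * (u - j).choose (K - j) = u.choose K * K.choose j := by
  rcases le_or_gt K u with hKu | hKu
  · exact (Nat.choose_mul h).symm
  · rw [Nat.choose_eq_zero_of_lt hKu, zero_mul]
    rcases le_or_gt j u with hju | hju
    · rw [Nat.choose_eq_zero_of_lt (show u - j < K - j by omega), mul_zero]
    · rw [Nat.choose_eq_zero_of_lt hju, zero_mul]

lemma key3 (M : ℕ) : ∀ t, M + 1 ≤ t →
    ∑ m ∈ range (M + 1),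
      (-1 : ℂ) ^ (M - m) * (t.choose m : ℂ) * ((t - m - 1).choose (M - m) : ℂ) = 1 := by
  induction M with
  | zero => intro t ht; simp
  | succ M ih =>
    intro t ht
    obtain ⟨u, rfl⟩ : ∃ u, t = u + 1 := ⟨t - 1, by omega⟩
    have hu : M + 1 ≤ u := by omega
    rw [Finset.sum_range_succ']
    have hsplit : ∀ m ∈ range (M + 1),
        (-1 : ℂ) ^ (M + 1 - (m + 1)) * ((u + 1).choose (m + 1) : ℂ)
          * ((u + 1 - (m + 1) - 1).choose (M + 1 - (m + 1)) : ℂ)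
        = (-1 : ℂ) ^ (M - m) * (u.choose m : ℂ) * ((u - m - 1).choose (M - m) : ℂ)
          + (-1 : ℂ) ^ (M - m) * (u.choose (m + 1) : ℂ) * ((u - m - 1).choose (M - m) : ℂ) := by
      intro m hm
      have e1 : M + 1 - (m + 1) = M - m := by omega
      have e2 : u + 1 - (m + 1) - 1 = u - m - 1 := by omega
      rw [e1, e2, Nat.choose_succ_succ']
      push_cast
      ring
    rw [Finset.sum_congr rfl hsplit, Finset.sum_add_distrib, ih u hu]
    simp only [Nat.sub_zero, Nat.choose_zero_right, Nat.cast_one, mul_one, Nat.add_sub_cancel]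
    have hV : ∑ j ∈ range (M + 2),
        (-1 : ℂ) ^ (M + 1 - j) * (u.choose j : ℂ) * ((u - j).choose (M + 1 - j) : ℂ) = 0 := by
      have hterm : ∀ j ∈ range (M + 2),
          (-1 : ℂ) ^ (M + 1 - j) * (u.choose j : ℂ) * ((u - j).choose (M + 1 - j) : ℂ)
          = (u.choose (M + 1) : ℂ) * ((-1 : ℂ) ^ (M + 1 - j) * ((M + 1).choose j : ℂ)) := by
        intro j hj
        have hjle : j ≤ M + 1 := by simp at hj; omega
        have hc := congrArg (fun x : ℕ => (x : ℂ)) (choose_helper u j (M + 1) hjle)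
        push_cast at hc
        calc (-1 : ℂ) ^ (M + 1 - j) * (u.choose j : ℂ) * ((u - j).choose (M + 1 - j) : ℂ)
            = (-1 : ℂ) ^ (M + 1 - j) * ((u.choose j : ℂ) * ((u - j).choose (M + 1 - j) : ℂ)) := by
              ring
          _ = (-1 : ℂ) ^ (M + 1 - j) * ((u.choose (M + 1) : ℂ) * ((M + 1).choose j : ℂ)) := by
              rw [hc]
          _ = (u.choose (M + 1) : ℂ) * ((-1 : ℂ) ^ (M + 1 - j) * ((M + 1).choose j : ℂ)) := by
              ring
      rw [Finset.sum_congr rfl hterm, ← Finset.mul_sum, alt_sum' (M + 1) (by omega), mul_zero]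
    have hT : ∑ j ∈ range (M + 2),
            (-1 : ℂ) ^ (M + 1 - j) * (u.choose j : ℂ) * ((u - j).choose (M + 1 - j) : ℂ)
        = ∑ m ∈ range (M + 1),
        (-1 : ℂ) ^ (M - m) * (u.choose (m + 1) : ℂ) * ((u - m - 1).choose (M - m) : ℂ)
        + (-1 : ℂ) ^ (M + 1) * (u.choose (M + 1) : ℂ) := by
      rw [Finset.sum_range_succ']
      simp only [Nat.sub_zero, Nat.choose_zero_right, Nat.cast_one, mul_one]
      congr 1
      apply Finset.sum_congr rfl
      intro m hm
      have e1 : M + 1 - (m + 1) = M - m := by omega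
      have e2 : u - (m + 1) = u - m - 1 := by omega
      rw [e1, e2]
    rw [hV] at hT
    linear_combination -hT

lemma sum_Icc_range (f : ℕ → ℂ) (a b : ℕ) (hab : a ≤ b) :
    ∑ i ∈ Icc a b, f i = ∑ m ∈ range (b + 1 - a), f (a + m) := by
  apply Finset.sum_nbij' (fun i => i - a) (fun m => a + m)
  · intro i hi; simp only [Finset.mem_Icc] at hi; simp only [Finset.mem_range]; omega
  · intro m hm; simp only [Finset.mem_range] at hm; simp only [Finset.mem_Icc]; omega
  · intro i hi; simp only [Finset.mem_Icc] at hi; omega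
  · intro m hm; omega
  · intro i hi; simp only [Finset.mem_Icc] at hi
    congr 1; omega

lemma key2 (N n k : ℕ) (hk1 : 1 ≤ k) (hkN : k ≤ N) (hn : N + 1 ≤ n) :
    (n.choose k : ℂ) = ∑ i ∈ Icc 1 N,
      (-1 : ℂ) ^ (N - i) * (n.choose i : ℂ) * ((n - i - 1).choose (N - i) : ℂ)
        * (i.choose k : ℂ) := by
  rw [← Finset.sum_subset (Finset.Icc_subset_Icc_left hk1 : Icc k N ⊆ Icc 1 N)
    (by
      intro i hi hni
      simp only [Finset.mem_Icc] at hi hni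
      have hz : i.choose k = 0 := Nat.choose_eq_zero_of_lt (by omega)
      rw [hz]; push_cast; ring)]
  have hterm : ∀ i ∈ Icc k N,
      (-1 : ℂ) ^ (N - i) * (n.choose i : ℂ) * ((n - i - 1).choose (N - i) : ℂ) * (i.choose k : ℂ)
      = (n.choose k : ℂ) *
        ((-1 : ℂ) ^ (N - i) * ((n - k).choose (i - k) : ℂ) * ((n - i - 1).choose (N - i) : ℂ)) := by
    intro i hi
    simp only [Finset.mem_Icc] at hi
    have hmul : n.choose i * i.choose k = n.choose k * (n - k).choose (i - k) :=
      Nat.choose_mul hi.1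
    have hc := congrArg (fun x : ℕ => (x : ℂ)) hmul
    push_cast at hc
    calc (-1 : ℂ) ^ (N - i) * (n.choose i : ℂ) * ((n - i - 1).choose (N - i) : ℂ)
          * (i.choose k : ℂ)
        = (-1 : ℂ) ^ (N - i) * ((n.choose i : ℂ) * (i.choose k : ℂ))
          * ((n - i - 1).choose (N - i) : ℂ) := by ring
      _ = (-1 : ℂ) ^ (N - i) * ((n.choose k : ℂ) * ((n - k).choose (i - k) : ℂ))
          * ((n - i - 1).choose (N - i) : ℂ) := by rw [hc]
      _ = (n.choose k : ℂ) *
          ((-1 : ℂ) ^ (N - i) * ((n - k).choose (i - k) : ℂ)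
            * ((n - i - 1).choose (N - i) : ℂ)) := by ring
  rw [Finset.sum_congr rfl hterm, ← Finset.mul_sum]
  have hinner : ∑ i ∈ Icc k N,
      (-1 : ℂ) ^ (N - i) * ((n - k).choose (i - k) : ℂ) * ((n - i - 1).choose (N - i) : ℂ)
      = 1 := by
    rw [sum_Icc_range _ k N hkN]
    have hM : N + 1 - k = (N - k) + 1 := by omega
    rw [hM]
    have hre : ∀ m ∈ range ((N - k) + 1),
        (-1 : ℂ) ^ (N - (k + m)) * ((n - k).choose ((k + m) - k) : ℂ)
          * ((n - (k + m) - 1).choose (N - (k + m)) : ℂ)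
        = (-1 : ℂ) ^ ((N - k) - m) * ((n - k).choose m : ℂ)
          * (((n - k) - m - 1).choose ((N - k) - m) : ℂ) := by
      intro m hm
      simp only [Finset.mem_range] at hm
      have e1 : N - (k + m) = (N - k) - m := by omega
      have e2 : (k + m) - k = m := by omega
      have e3 : n - (k + m) - 1 = (n - k) - m - 1 := by omega
      rw [e1, e2, e3]
    rw [Finset.sum_congr rfl hre]
    exact key3 (N - k) (n - k) (by omega)
  rw [hinner, mul_one]

lemma lam_formula (N : ℕ) (A : ℕ → ℕ → ℂ) (lam : ℕ → ℂ) (P : ℕ → Polynomial ℂ)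
    (hmon : ∀ n, (P n).Monic) (hdeg : ∀ n, (P n).natDegree = n)
    (heq : ∀ n, ∑ i ∈ Icc 1 N, apoly A i * (Polynomial.derivative^[i] (P n)) = C (lam n) * P n)
    (n : ℕ) :
    lam n = ∑ i ∈ Icc 1 N, A i i * (n.descFactorial i : ℂ) := by
  have hc : (P n).coeff n = 1 := by
    have := (hmon n).coeff_natDegree
    rwa [hdeg] at this
  have h := congrArg (fun p => Polynomial.coeff p n) (heq n)
  simp only [Polynomial.finset_sum_coeff, Polynomial.coeff_C_mul, hc, mul_one] at h
  have hterm : ∀ i ∈ Icc 1 N,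
      (apoly A i * (Polynomial.derivative^[i] (P n))).coeff n
      = A i i * (n.descFactorial i : ℂ) := by
    intro i hi
    rw [apoly, Finset.sum_mul, Polynomial.finset_sum_coeff]
    rw [Finset.sum_eq_single i]
    · rw [mul_assoc, Polynomial.coeff_C_mul,
        mul_comm (X ^ i : Polynomial ℂ), Polynomial.coeff_mul_X_pow']
      by_cases hin : i ≤ n
      · rw [if_pos hin, Polynomial.coeff_iterate_derivative]
        have e : n - i + i = n := by omega
        rw [e, hc, nsmul_eq_mul, mul_one]
      · rw [if_neg hin, mul_zero,
          Nat.descFactorial_eq_zero_iff_lt.mpr (by omega), Nat.cast_zero, mul_zero]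
    · intro j hj hji
      rw [mul_assoc, Polynomial.coeff_C_mul,
        mul_comm (X ^ j : Polynomial ℂ), Polynomial.coeff_mul_X_pow']
      have hj' : j < i + 1 := Finset.mem_range.mp hj
      by_cases hjn : j ≤ n
      · rw [if_pos hjn, Polynomial.coeff_iterate_derivative,
          Polynomial.coeff_eq_zero_of_natDegree_lt (by rw [hdeg]; omega),
          smul_zero, mul_zero]
      · rw [if_neg hjn, mul_zero]
    · intro hni
      exact absurd (Finset.self_mem_range_succ i) hni
  rw [Finset.sum_congr rfl hterm] at h
  exact h.symm

theorem stmt11 (N : ℕ) (A : ℕ → ℕ → ℂ) (lam : ℕ → ℂ) (P : ℕ → Polynomial ℂ)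
    (hmon : ∀ n, (P n).Monic) (hdeg : ∀ n, (P n).natDegree = n)
    (heq : ∀ n, ∑ i ∈ Icc 1 N, apoly A i * (Polynomial.derivative^[i] (P n)) = C (lam n) * P n) :
    ∀ n, N + 1 ≤ n →
      lam n = ∑ i ∈ Icc 1 N,
        (-1 : ℂ) ^ (N - i) * (n.choose i : ℂ) * ((n - i - 1).choose (N - i) : ℂ) * lam i := by
  intro n hn
  have hl : ∀ m, lam m = ∑ k ∈ Icc 1 N, A k k * (m.descFactorial k : ℂ) :=
    lam_formula N A lam P hmon hdeg heq
  have hk2 : ∀ k ∈ Icc 1 N, (n.descFactorial k : ℂ)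
      = ∑ i ∈ Icc 1 N, (-1 : ℂ) ^ (N - i) * (n.choose i : ℂ)
          * ((n - i - 1).choose (N - i) : ℂ) * (i.descFactorial k : ℂ) := by
    intro k hk
    simp only [Finset.mem_Icc] at hk
    simp only [Nat.descFactorial_eq_factorial_mul_choose, Nat.cast_mul]
    rw [key2 N n k hk.1 hk.2 hn, Finset.mul_sum]
    apply Finset.sum_congr rfl
    intro i _
    ring
  rw [hl n]
  calc ∑ k ∈ Icc 1 N, A k k * (n.descFactorial k : ℂ)
      = ∑ k ∈ Icc 1 N, ∑ i ∈ Icc 1 N, A k k * ((-1 : ℂ) ^ (N - i) * (n.choose i : ℂ)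
          * ((n - i - 1).choose (N - i) : ℂ) * (i.descFactorial k : ℂ)) := by
        apply Finset.sum_congr rfl
        intro k hk
        rw [hk2 k hk, Finset.mul_sum]
    _ = ∑ i ∈ Icc 1 N, ∑ k ∈ Icc 1 N, A k k * ((-1 : ℂ) ^ (N - i) * (n.choose i : ℂ)
          * ((n - i - 1).choose (N - i) : ℂ) * (i.descFactorial k : ℂ)) := Finset.sum_comm
    _ = ∑ i ∈ Icc 1 N,
          (-1 : ℂ) ^ (N - i) * (n.choose i : ℂ) * ((n - i - 1).choose (N - i) : ℂ) * lam i := by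
        apply Finset.sum_congr rfl
        intro i _
        rw [hl i, Finset.mul_sum]
        apply Finset.sum_congr rfl
        intro k _
        ring
end

section
/- Fix N ≥ 1 and complex numbers c_1, …, c_N, and set c_s = 0 for s > N. Define δ_m = ∑_{s=1}^{m} C(m,s) · s! · c_s for m ∈ ℕ (so δ_0 = 0). For each n ∈ ℕ define the monic polynomial P_n(x) = x^n + ∑_{i=1}^{n} (δ_n · δ_{n−1} ⋯ δ_{n−i+1} / i!) · x^{n−i}. Then for every n ∈ ℕ, P_n satisfies ∑_{i=1}^{N} c_i · x^{i−1} · P_n^{(i)}(x) + x · P_n'(x) = n · P_n(x). -/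
open Finset Polynomial

/-- `δ_m = ∑_{s=1}^{m} C(m,s) s! c_s` (denoted `δ_m^{(1)}` in the paper). -/
noncomputable def deltac (c : ℕ → ℂ) (m : ℕ) : ℂ :=
  ∑ s ∈ Icc 1 m, (m.choose s : ℂ) * (s.factorial : ℂ) * c s

/-- `P_n(x) = x^n + ∑_{i=1}^{n} (δ_n δ_{n-1} ⋯ δ_{n-i+1} / i!) x^{n-i}`. -/
noncomputable def Pc (c : ℕ → ℂ) (n : ℕ) : Polynomial ℂ :=
  X ^ n + ∑ i ∈ Icc 1 n, C ((∏ j ∈ range i, deltac c (n - j)) / (i.factorial : ℂ)) * X ^ (n - i)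

lemma deltac_eq (N : ℕ) (c : ℕ → ℂ) (hc : ∀ s, N < s → c s = 0) (m : ℕ) :
    deltac c m = ∑ i ∈ Icc 1 N, c i * (m.descFactorial i : ℂ) := by
  have h0 : deltac c m = ∑ s ∈ Icc 1 m, c s * (m.descFactorial s : ℂ) := by
    rw [deltac]
    apply Finset.sum_congr rfl
    intro s _
    rw [Nat.descFactorial_eq_factorial_mul_choose]
    push_cast; ring
  have h1 : deltac c m = ∑ s ∈ Icc 1 (m + N), c s * (m.descFactorial s : ℂ) := by
    rw [h0, Finset.sum_subset (Finset.Icc_subset_Icc_right (Nat.le_add_right m N))]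
    intro s hs hs'
    simp only [Finset.mem_Icc] at hs hs'
    rw [Nat.descFactorial_eq_zero_iff_lt.2 (by omega), Nat.cast_zero, mul_zero]
  rw [h1, Finset.sum_subset (Finset.Icc_subset_Icc_right (Nat.le_add_left N m))]
  intro s hs hs'
  simp only [Finset.mem_Icc] at hs hs'
  rw [hc s (by omega), zero_mul]

lemma Lmono (N : ℕ) (c : ℕ → ℂ) (hc : ∀ s, N < s → c s = 0) (m : ℕ) :
    ∑ i ∈ Icc 1 N, C (c i) * X ^ (i - 1) * (Polynomial.derivative^[i] ((X : Polynomial ℂ) ^ m))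
      + X * Polynomial.derivative ((X : Polynomial ℂ) ^ m)
      = C (m : ℂ) * X ^ m + C (deltac c m) * X ^ (m - 1) := by
  have h1 : ∑ i ∈ Icc 1 N, C (c i) * X ^ (i - 1) *
      (Polynomial.derivative^[i] ((X : Polynomial ℂ) ^ m))
      = C (deltac c m) * X ^ (m - 1) := by
    rw [deltac_eq N c hc m, map_sum, Finset.sum_mul]
    apply Finset.sum_congr rfl
    intro i hi
    simp only [Finset.mem_Icc] at hi
    rw [Polynomial.iterate_derivative_X_pow_eq_C_mul]
    rcases le_or_gt i m with h | h
    · rw [show C (c i) * X ^ (i - 1) * (C ((m.descFactorial i : ℕ) : ℂ) * X ^ (m - i))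
          = C (c i) * C ((m.descFactorial i : ℕ) : ℂ) * (X ^ (i - 1) * X ^ (m - i)) from by ring,
        ← pow_add, show i - 1 + (m - i) = m - 1 from by omega, map_mul]
    · rw [Nat.descFactorial_eq_zero_iff_lt.2 h]
      simp
  rw [h1]
  have h2 : (X : Polynomial ℂ) * Polynomial.derivative ((X : Polynomial ℂ) ^ m)
      = C (m : ℂ) * X ^ m := by
    rw [derivative_X_pow]
    cases m with
    | zero => simp
    | succ k =>
      rw [mul_comm (X : Polynomial ℂ), mul_assoc, ← pow_succ]
      simp
  rw [h2, add_comm]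

lemma Pc_eq (c : ℕ → ℂ) (n : ℕ) :
    Pc c n = ∑ i ∈ range (n + 1),
      C ((∏ j ∈ range i, deltac c (n - j)) / (i.factorial : ℂ)) * X ^ (n - i) := by
  rw [Pc, Finset.sum_range_succ']
  simp only [Finset.prod_range_zero, Nat.factorial_zero, Nat.cast_one, div_one, map_one, one_mul,
    Nat.sub_zero]
  rw [add_comm]
  congr 1
  rw [← Finset.Ico_add_one_right_eq_Icc, Finset.sum_Ico_eq_sum_range]
  simp only [Nat.add_sub_cancel]
  apply Finset.sum_congr rfl
  intro j _
  rw [Nat.add_comm 1 j]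

theorem stmt12 (N : ℕ) (hN : 1 ≤ N) (c : ℕ → ℂ) (hc : ∀ s, N < s → c s = 0) (n : ℕ) :
    ∑ i ∈ Icc 1 N, C (c i) * X ^ (i - 1) * (Polynomial.derivative^[i] (Pc c n)) +
        X * Polynomial.derivative (Pc c n) = C (n : ℂ) * Pc c n := by
  set a : ℕ → ℂ := fun i => (∏ j ∈ range i, deltac c (n - j)) / (i.factorial : ℂ) with ha
  have Pc_eq' : Pc c n = ∑ k ∈ range (n + 1), C (a k) * X ^ (n - k) := Pc_eq c n
  have key : ∀ k, ∑ i ∈ Icc 1 N,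
      C (c i) * X ^ (i - 1) * (Polynomial.derivative^[i] (C (a k) * X ^ (n - k)))
      + X * Polynomial.derivative (C (a k) * X ^ (n - k))
      = C (a k) * (C ((n - k : ℕ) : ℂ) * X ^ (n - k) + C (deltac c (n - k)) * X ^ (n - k - 1)) := by
    intro k
    rw [← Lmono N c hc (n - k)]
    rw [mul_add]
    congr 1
    · rw [Finset.mul_sum]
      apply Finset.sum_congr rfl
      intro i _
      rw [Polynomial.iterate_derivative_C_mul]
      ring
    · rw [Polynomial.derivative_C_mul]
      ring
  rw [Pc_eq']
  rw [Finset.mul_sum]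
  have hswap : ∑ i ∈ Icc 1 N, C (c i) * X ^ (i - 1) *
      (Polynomial.derivative^[i] (∑ k ∈ range (n + 1), C (a k) * X ^ (n - k)))
      + X * Polynomial.derivative (∑ k ∈ range (n + 1), C (a k) * X ^ (n - k))
      = ∑ k ∈ range (n + 1), (∑ i ∈ Icc 1 N,
          C (c i) * X ^ (i - 1) * (Polynomial.derivative^[i] (C (a k) * X ^ (n - k)))
          + X * Polynomial.derivative (C (a k) * X ^ (n - k))) := by
    rw [Finset.sum_add_distrib]
    congr 1
    · rw [Finset.sum_comm]
      apply Finset.sum_congr rfl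
      intro i _
      rw [Polynomial.iterate_derivative_sum, Finset.mul_sum]
    · rw [map_sum, Finset.mul_sum]
  rw [hswap]
  simp only [key]
  have expand : ∀ k ∈ range (n + 1),
      C (a k) * (C ((n - k : ℕ) : ℂ) * X ^ (n - k) + C (deltac c (n - k)) * X ^ (n - k - 1))
      = C (a k * ((n - k : ℕ) : ℂ)) * X ^ (n - k)
        + C (a k * deltac c (n - k)) * X ^ (n - k - 1) := by
    intro k _
    rw [map_mul, map_mul]; ring
  rw [Finset.sum_congr rfl expand, Finset.sum_add_distrib]
  have hshift : ∑ k ∈ range (n + 1), C (a k * deltac c (n - k)) * X ^ (n - k - 1)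
      = ∑ k ∈ range (n + 1), C ((k : ℂ) * a k) * X ^ (n - k) := by
    rw [Finset.sum_range_succ, Finset.sum_range_succ']
    have hz : deltac c (n - n) = 0 := by simp [deltac]
    rw [hz, mul_zero, map_zero, zero_mul, add_zero, Nat.cast_zero, zero_mul, map_zero, zero_mul,
      add_zero]
    apply Finset.sum_congr rfl
    intro j hj
    simp only [Finset.mem_range] at hj
    have h1 : n - j - 1 = n - (j + 1) := by omega
    rw [h1]
    congr 1
    congr 1
    have hfac : ((j + 1).factorial : ℂ) = (j + 1 : ℂ) * (j.factorial : ℂ) := by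
      push_cast [Nat.factorial_succ]; ring
    simp only [ha]
    rw [Finset.prod_range_succ, hfac]
    have hjne : ((j : ℂ) + 1) ≠ 0 := Nat.cast_add_one_ne_zero j
    have hfne : ((j.factorial : ℂ)) ≠ 0 := Nat.cast_ne_zero.2 j.factorial_ne_zero
    field_simp
    push_cast
    ring
  rw [hshift, ← Finset.sum_add_distrib]
  apply Finset.sum_congr rfl
  intro k hk
  simp only [Finset.mem_range] at hk
  have hnk : ((n - k : ℕ) : ℂ) = (n : ℂ) - (k : ℂ) := by
    push_cast [Nat.cast_sub (by omega : k ≤ n)]; ring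
  rw [← add_mul, ← map_add, ← mul_assoc, ← map_mul]
  congr 1
  congr 1
  rw [hnk]; ring
end

section
/- Let λ: ℕ → ℂ and, for each n ∈ ℕ, let P_n(x) = ∑_{i=0}^{n} b_{n,i} x^i be a monic polynomial of degree n (b_{n,n} = 1). Define δ_n^{(0)} = λ_n; for 1 ≤ k ≤ n define δ_n^{(k)} = (−1)^k · det(D), where D is the k×k matrix with entries (rows and columns indexed from 1 to k): D_{1,j} = (λ_{n−k} − λ_{n−k+j}) · b_{n−k+j, n−k} for 1 ≤ j ≤ k; D_{r,r−1} = 1 for 2 ≤ r ≤ k; D_{r,j} = b_{n−k+j, n−k+r−1} for 2 ≤ r ≤ j ≤ k; and D_{r,j} = 0 for j < r−1. Set δ_n^{(k)} = 0 for k > n. Define a_{n,n−k} = (1/n!) · ∑_{i=k}^{n} C(n,i) · (−1)^{n−i} · δ_i^{(k)} for 0 ≤ k ≤ n, and a_n(x) = ∑_{k=0}^{n} a_{n,n−k} x^{n−k}. Fix N ∈ ℕ. Then the following are equivalent: (1) a_i(x) = 0 for every i > N, and for every n, ∑_{i=0}^{N} a_i(x) · P_n^{(i)}(x) = λ_n ·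 P_n(x); (2) for every n ≥ N+1 and 0 ≤ k ≤ N, δ_n^{(k)} = ∑_{i=k}^{N} (−1)^{N−i} · C(n,i) · C(n−i−1, N−i) · δ_i^{(k)}, and δ_n^{(k)} = 0 whenever n ≥ k > N. -/
open Finset Polynomial

lemma sum_Icc_eq_sum_range' {M : Type*} [AddCommMonoid M] (f : ℕ → M) (a b : ℕ) :
    ∑ i ∈ Icc a b, f i = ∑ t ∈ range (b + 1 - a), f (a + t) := by
  rw [← Finset.Ico_add_one_right_eq_Icc, Finset.sum_Ico_eq_sum_range]

lemma alt_sum_choose (m : ℕ) :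
    ∑ t ∈ range (m + 1), (-1 : ℂ) ^ t * (m.choose t : ℂ) = if m = 0 then 1 else 0 := by
  have h := Int.alternating_sum_range_choose (n := m)
  have h2 : ((∑ i ∈ range (m + 1), (-1 : ℤ) ^ i * (m.choose i : ℤ) : ℤ) : ℂ)
      = ((if m = 0 then 1 else 0 : ℤ) : ℂ) := congrArg (fun z : ℤ => (z : ℂ)) h
  push_cast at h2
  split_ifs at h2 ⊢ <;> simpa using h2

lemma alt_sum_choose_mul (j n : ℕ) (hjn : j ≤ n) :
    ∑ i ∈ Icc j n, (-1 : ℂ) ^ (i - j) * (n.choose i : ℂ) * (i.choose j : ℂ)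
      = if n = j then 1 else 0 := by
  have key : ∀ i ∈ Icc j n, (-1 : ℂ) ^ (i - j) * (n.choose i : ℂ) * (i.choose j : ℂ)
      = (n.choose j : ℂ) * ((-1 : ℂ) ^ (i - j) * (((n - j).choose (i - j) : ℕ) : ℂ)) := by
    intro i hi
    simp only [mem_Icc] at hi
    have h := Nat.choose_mul (n := n) (k := i) (s := j) hi.1
    have hc : ((n.choose i : ℕ) : ℂ) * ((i.choose j : ℕ) : ℂ)
        = ((n.choose j : ℕ) : ℂ) * (((n - j).choose (i - j) : ℕ) : ℂ) := by exact_mod_cast h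
    linear_combination (-1 : ℂ) ^ (i - j) * hc
  rw [Finset.sum_congr rfl key, ← Finset.mul_sum, sum_Icc_eq_sum_range']
  have hre : ∀ t, (-1 : ℂ) ^ (j + t - j) * (((n - j).choose (j + t - j) : ℕ) : ℂ)
      = (-1 : ℂ) ^ t * (((n - j).choose t : ℕ) : ℂ) := by
    intro t; rw [Nat.add_sub_cancel_left]
  rw [Finset.sum_congr rfl fun t _ => hre t]
  have : n + 1 - j = (n - j) + 1 := by omega
  rw [this, alt_sum_choose (n - j)]
  rcases eq_or_ne n j with h | h
  · simp [h]
  · have : ¬ (n - j = 0) := by omega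
    simp [h, this]

-- partial alternating sum of binomials
lemma alt_sum_choose_partial (m M : ℕ) (hm : 1 ≤ m) :
    ∑ t ∈ range (M + 1), (-1 : ℂ) ^ t * (m.choose t : ℂ)
      = (-1 : ℂ) ^ M * ((m - 1).choose M : ℂ) := by
  induction M with
  | zero => simp
  | succ M ih =>
    rw [Finset.sum_range_succ, ih]
    obtain ⟨m', rfl⟩ : ∃ m', m = m' + 1 := ⟨m - 1, by omega⟩
    have hp : (m' + 1).choose (M + 1) = m'.choose M + m'.choose (M + 1) :=
      Nat.choose_succ_succ m' M
    simp only [Nat.add_sub_cancel]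
    have : ((m' + 1).choose (M + 1) : ℂ) = (m'.choose M : ℂ) + (m'.choose (M + 1) : ℂ) := by
      exact_mod_cast congrArg (fun z : ℕ => (z : ℂ)) hp
    rw [this]; ring

lemma alt_sum_choose_mul' (M m : ℕ) (h : M < m) :
    ∑ s ∈ Icc M m, (-1 : ℂ) ^ s * (m.choose s : ℂ) * (s.choose M : ℂ) = 0 := by
  have h1 := alt_sum_choose_mul M m h.le
  rw [if_neg (by omega)] at h1
  calc ∑ s ∈ Icc M m, (-1 : ℂ) ^ s * (m.choose s : ℂ) * (s.choose M : ℂ)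
      = ∑ s ∈ Icc M m, (-1 : ℂ) ^ M *
          ((-1 : ℂ) ^ (s - M) * (m.choose s : ℂ) * (s.choose M : ℂ)) := by
        apply Finset.sum_congr rfl
        intro s hs
        simp only [mem_Icc] at hs
        rw [← mul_assoc, ← mul_assoc, ← pow_add]
        congr 3
        omega
    _ = (-1 : ℂ) ^ M * ∑ s ∈ Icc M m, (-1 : ℂ) ^ (s - M) * (m.choose s : ℂ) * (s.choose M : ℂ) := by
        rw [Finset.mul_sum]
    _ = 0 := by rw [h1, mul_zero]

lemma alt_sum_E2 (M : ℕ) : ∀ m, M + 1 ≤ m →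
    ∑ t ∈ Icc (M + 1) m, (-1 : ℂ) ^ t * (m.choose t : ℂ) * ((t - 1).choose M : ℂ)
      = (-1 : ℂ) ^ (M + 1) := by
  intro m
  induction m with
  | zero => omega
  | succ m ih =>
    intro hm
    rcases Nat.lt_or_ge M m with hMm | hMm
    · -- m ≥ M+1 : use Pascal
      have hsplit : ∀ t ∈ Icc (M + 1) (m + 1),
          (-1 : ℂ) ^ t * ((m + 1).choose t : ℂ) * ((t - 1).choose M : ℂ)
          = (-1 : ℂ) ^ t * (m.choose t : ℂ) * ((t - 1).choose M : ℂ)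
            + (-1 : ℂ) ^ t * (m.choose (t - 1) : ℂ) * ((t - 1).choose M : ℂ) := by
        intro t ht
        simp only [mem_Icc] at ht
        obtain ⟨t', rfl⟩ : ∃ t', t = t' + 1 := ⟨t - 1, by omega⟩
        have hp : (m + 1).choose (t' + 1) = m.choose t' + m.choose (t' + 1) :=
          Nat.choose_succ_succ m t'
        have hp' : ((m + 1).choose (t' + 1) : ℂ) = (m.choose t' : ℂ) + (m.choose (t' + 1) : ℂ) := by
          exact_mod_cast congrArg (fun z : ℕ => (z : ℂ)) hp
        simp only [Nat.add_sub_cancel]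
        rw [hp']; ring
      rw [Finset.sum_congr rfl hsplit, Finset.sum_add_distrib]
      have h1 : ∑ t ∈ Icc (M + 1) (m + 1), (-1 : ℂ) ^ t * (m.choose t : ℂ) * ((t - 1).choose M : ℂ)
          = (-1 : ℂ) ^ (M + 1) := by
        rw [← Finset.Ico_add_one_right_eq_Icc, Finset.sum_Ico_succ_top (by omega), Finset.Ico_add_one_right_eq_Icc]
        rw [ih (by omega)]
        simp [Nat.choose_succ_self]
      have h2 : ∑ t ∈ Icc (M + 1) (m + 1), (-1 : ℂ) ^ t * (m.choose (t - 1) : ℂ) * ((t - 1).choose M : ℂ)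
          = 0 := by
        have hre : ∑ t ∈ Icc (M + 1) (m + 1), (-1 : ℂ) ^ t * (m.choose (t - 1) : ℂ) * ((t - 1).choose M : ℂ)
            = ∑ s ∈ Icc M m, (-1 : ℂ) * ((-1 : ℂ) ^ s * (m.choose s : ℂ) * (s.choose M : ℂ)) := by
          rw [sum_Icc_eq_sum_range', sum_Icc_eq_sum_range']
          have : m + 1 + 1 - (M + 1) = m + 1 - M := by omega
          rw [this]
          apply Finset.sum_congr rfl
          intro t _
          have e1 : M + 1 + t - 1 = M + t := by omega
          rw [e1, pow_add, pow_add]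
          ring
        rw [hre, ← Finset.mul_sum, alt_sum_choose_mul' M m (by omega), mul_zero]
      rw [h1, h2, add_zero]
    · -- m = M, base case m+1 = M+1
      have : m = M := by omega
      subst this
      rw [show Icc (m + 1) (m + 1) = {m + 1} from Finset.Icc_self _]
      simp
lemma sum_Icc_Icc_swap (f : ℕ → ℕ → ℂ) (k n : ℕ) :
    ∑ i ∈ Icc k n, ∑ j ∈ Icc k i, f i j = ∑ j ∈ Icc k n, ∑ i ∈ Icc j n, f i j := by
  rw [Finset.sum_sigma', Finset.sum_sigma']
  apply Finset.sum_nbij' (fun p => ⟨p.2, p.1⟩) (fun p => ⟨p.2, p.1⟩) <;>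
    simp only [Finset.mem_sigma, mem_Icc] <;> intros <;> first | omega | trivial

lemma binomial_inversion (F : ℕ → ℂ) (k n : ℕ) (hkn : k ≤ n) :
    ∑ i ∈ Icc k n, (n.choose i : ℂ) *
      (∑ j ∈ Icc k i, (i.choose j : ℂ) * (-1 : ℂ) ^ (i - j) * F j) = F n := by
  have step1 : ∑ i ∈ Icc k n, (n.choose i : ℂ) *
      (∑ j ∈ Icc k i, (i.choose j : ℂ) * (-1 : ℂ) ^ (i - j) * F j)
      = ∑ i ∈ Icc k n, ∑ j ∈ Icc k i,
          ((-1 : ℂ) ^ (i - j) * (n.choose i : ℂ) * (i.choose j : ℂ)) * F j := by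
    apply Finset.sum_congr rfl
    intro i _
    rw [Finset.mul_sum]
    apply Finset.sum_congr rfl
    intro j _
    ring
  rw [step1, sum_Icc_Icc_swap]
  have step2 : ∀ j ∈ Icc k n,
      ∑ i ∈ Icc j n, ((-1 : ℂ) ^ (i - j) * (n.choose i : ℂ) * (i.choose j : ℂ)) * F j
      = (if n = j then 1 else 0) * F j := by
    intro j hj
    simp only [mem_Icc] at hj
    rw [← Finset.sum_mul, alt_sum_choose_mul j n hj.2]
  rw [Finset.sum_congr rfl step2]
  have hfin : ∑ x ∈ Icc k n, (if n = x then 1 else 0 : ℂ) * F x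
      = ∑ x ∈ Icc k n, (if n = x then F x else 0) := by
    apply Finset.sum_congr rfl; intro x _; split_ifs <;> simp
  rw [hfin, Finset.sum_ite_eq (Icc k n) n F, if_pos (mem_Icc.mpr ⟨hkn, le_refl n⟩)]
noncomputable def Pn (b : ℕ → ℕ → ℂ) (n : ℕ) : Polynomial ℂ :=
  ∑ i ∈ range (n + 1), C (b n i) * X ^ i

/-- The sequence `δ_n^{(k)}` defined from `{λ_n}` and the coefficients `{b_{n,i}}`:
`δ_n^{(0)} = λ_n`, for `1 ≤ k ≤ n` it is `(-1)^k` times the determinant of the `k×k`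
matrix `D` of the paper, and `δ_n^{(k)} = 0` for `k > n`. -/
noncomputable def deltaInv (lam : ℕ → ℂ) (b : ℕ → ℕ → ℂ) (n k : ℕ) : ℂ :=
  if k = 0 then lam n
  else if k ≤ n then
    (-1 : ℂ) ^ k *
      Matrix.det (fun r j : Fin k =>
        if (r : ℕ) = 0 then
          (lam (n - k) - lam (n - k + (j : ℕ) + 1)) * b (n - k + (j : ℕ) + 1) (n - k)
        else if (j : ℕ) + 1 = (r : ℕ) then 1
        else if (r : ℕ) ≤ (j : ℕ) then b (n - k + (j : ℕ) + 1) (n - k + (r : ℕ))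
        else 0)
  else 0

/-- `a_{n,n-k} = (1/n!) ∑_{i=k}^{n} C(n,i) (-1)^{n-i} δ_i^{(k)}`. -/
noncomputable def aInv (lam : ℕ → ℂ) (b : ℕ → ℕ → ℂ) (n k : ℕ) : ℂ :=
  (1 / (n.factorial : ℂ)) * ∑ i ∈ Icc k n, (n.choose i : ℂ) * (-1) ^ (n - i) * deltaInv lam b i k

/-- `a_n(x) = ∑_{k=0}^{n} a_{n,n-k} x^{n-k}`. -/
noncomputable def aInvPoly (lam : ℕ → ℂ) (b : ℕ → ℕ → ℂ) (n : ℕ) : Polynomial ℂ :=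
  ∑ k ∈ range (n + 1), C (aInv lam b n k) * X ^ (n - k)

lemma deltaInv_eq_sum_aInv (lam : ℕ → ℂ) (b : ℕ → ℕ → ℂ) {n k : ℕ} (hk : k ≤ n) :
    deltaInv lam b n k = ∑ i ∈ Icc k n, (n.descFactorial i : ℂ) * aInv lam b i k := by
  have key : ∀ i ∈ Icc k n, (n.descFactorial i : ℂ) * aInv lam b i k
      = (n.choose i : ℂ) *
        (∑ j ∈ Icc k i, (i.choose j : ℂ) * (-1 : ℂ) ^ (i - j) * deltaInv lam b j k) := by
    intro i hi
    simp only [mem_Icc] at hi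
    rw [aInv]
    have hdf : (n.descFactorial i : ℂ) = (i.factorial : ℂ) * (n.choose i : ℂ) := by
      exact_mod_cast congrArg (fun z : ℕ => (z : ℂ)) (Nat.descFactorial_eq_factorial_mul_choose n i)
    rw [hdf]
    have hfne : (i.factorial : ℂ) ≠ 0 := by exact_mod_cast i.factorial_ne_zero
    field_simp
  rw [Finset.sum_congr rfl key,
    binomial_inversion (fun j => deltaInv lam b j k) k n hk]
noncomputable def dp (lam : ℕ → ℂ) (b : ℕ → ℕ → ℂ) (p : ℕ) : ℕ → ℂ
  | 0 => lam p
  | k + 1 =>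
      (lam (p + k + 1) - lam p) * b (p + k + 1) p -
        ∑ s ∈ (range k).attach, b (p + k + 1) (p + (s : ℕ) + 1) * dp lam b p ((s : ℕ) + 1)
  termination_by k => k
  decreasing_by
    have := Finset.mem_range.mp s.2
    omega

lemma dp_succ (lam : ℕ → ℂ) (b : ℕ → ℕ → ℂ) (p k : ℕ) :
    dp lam b p (k + 1) =
      (lam (p + k + 1) - lam p) * b (p + k + 1) p -
        ∑ s ∈ range k, b (p + k + 1) (p + s + 1) * dp lam b p (s + 1) := by
  rw [dp]
  congr 1
  exact Finset.sum_attach (range k) (fun t => b (p + k + 1) (p + t + 1) * dp lam b p (t + 1))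
section DetLemma
open Matrix

variable (lam : ℕ → ℂ) (b : ℕ → ℕ → ℂ) (p K : ℕ)

/-- The lower triangular system matrix. -/
noncomputable def Amat : Matrix (Fin (K + 1)) (Fin (K + 1)) ℂ := Matrix.of fun r s =>
  if (s : ℕ) = (r : ℕ) then 1
  else if (s : ℕ) < (r : ℕ) then b (p + (r : ℕ) + 1) (p + (s : ℕ) + 1) else 0

/-- The right hand side. -/
noncomputable def vvec : Fin (K + 1) → ℂ := fun r =>
  (lam (p + (r : ℕ) + 1) - lam p) * b (p + (r : ℕ) + 1) p

/-- The determinant matrix of the paper. -/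
noncomputable def Mmat : Matrix (Fin (K + 1)) (Fin (K + 1)) ℂ := Matrix.of fun r j =>
  if (r : ℕ) = 0 then (lam p - lam (p + (j : ℕ) + 1)) * b (p + (j : ℕ) + 1) p
  else if (j : ℕ) + 1 = (r : ℕ) then 1
  else if (r : ℕ) ≤ (j : ℕ) then b (p + (j : ℕ) + 1) (p + (r : ℕ))
  else 0

lemma Amat_det : (Amat b p K).det = 1 := by
  have htri : (Amat b p K).BlockTriangular OrderDual.toDual := by
    intro i j hij
    have : (i : ℕ) < (j : ℕ) := hij
    simp only [Amat, Matrix.of_apply]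
    rw [if_neg (by omega), if_neg (by omega)]
  rw [Matrix.det_of_lowerTriangular _ htri]
  have : ∀ i : Fin (K + 1), Amat b p K i i = 1 := by
    intro i; simp [Amat]
  rw [Finset.prod_congr rfl (fun i _ => this i), Finset.prod_const_one]

lemma Amat_mulVec :
    (Amat b p K) *ᵥ (fun s : Fin (K + 1) => dp lam b p ((s : ℕ) + 1)) = vvec lam b p K := by
  funext r
  show ∑ s : Fin (K + 1), Amat b p K r s * dp lam b p ((s : ℕ) + 1) = _
  have hterm : ∀ s : Fin (K + 1), Amat b p K r s * dp lam b p ((s : ℕ) + 1)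
      = (fun t : ℕ => (if t = (r : ℕ) then 1
          else if t < (r : ℕ) then b (p + (r : ℕ) + 1) (p + t + 1) else 0) *
          dp lam b p (t + 1)) (s : ℕ) := fun s => rfl
  rw [Finset.sum_congr rfl (fun s _ => hterm s)]
  rw [Fin.sum_univ_eq_sum_range (fun t : ℕ => (if t = (r : ℕ) then 1
      else if t < (r : ℕ) then b (p + (r : ℕ) + 1) (p + t + 1) else 0) *
      dp lam b p (t + 1)) (K + 1)]
  have hsub : ∑ t ∈ range (K + 1),
      (if t = (r : ℕ) then 1
        else if t < (r : ℕ) then b (p + (r : ℕ) + 1) (p + t + 1) else 0) * dp lam b p (t + 1)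
      = ∑ t ∈ range ((r : ℕ) + 1),
      (if t = (r : ℕ) then 1
        else if t < (r : ℕ) then b (p + (r : ℕ) + 1) (p + t + 1) else 0) * dp lam b p (t + 1) := by
    refine (Finset.sum_subset ?_ ?_).symm
    · intro x hx; simp only [mem_range] at *; omega
    · intro x _ hx
      simp only [mem_range] at hx
      rw [if_neg (by omega), if_neg (by omega), zero_mul]
  rw [hsub, Finset.sum_range_succ, if_pos rfl, one_mul, dp_succ]
  have hrest : ∀ t ∈ range (r : ℕ),
      (if t = (r : ℕ) then 1
        else if t < (r : ℕ) then b (p + (r : ℕ) + 1) (p + t + 1) else 0) * dp lam b p (t + 1)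
      = b (p + (r : ℕ) + 1) (p + t + 1) * dp lam b p (t + 1) := by
    intro t ht
    simp only [mem_range] at ht
    rw [if_neg (by omega), if_pos ht]
  rw [Finset.sum_congr rfl hrest]
  show _ + (_ - _) = (lam (p + (r : ℕ) + 1) - lam p) * b (p + (r : ℕ) + 1) p
  ring

end DetLemma
open Matrix
lemma Emat_eq (lam : ℕ → ℂ) (b : ℕ → ℕ → ℂ) (p K : ℕ) :
    ((Amat b p K).updateCol (Fin.last K) (vvec lam b p K))ᵀ
      = Matrix.of (fun i j =>
          (if i = Fin.last K then (-1 : ℂ) else 1) *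
            ((Mmat lam b p K).submatrix (finRotate (K + 1)) id) i j) := by
  funext i j
  show (Amat b p K).updateCol (Fin.last K) (vvec lam b p K) j i = _
  rw [Matrix.updateCol_apply]
  simp only [Matrix.of_apply]
  by_cases hi : i = Fin.last K
  · subst hi
    rw [if_pos rfl, if_pos rfl]
    simp only [Matrix.submatrix_apply, id_eq, finRotate_last]
    have h0 : ((0 : Fin (K + 1)) : ℕ) = 0 := rfl
    simp only [Mmat, Matrix.of_apply, h0, if_pos rfl]
    show vvec lam b p K j = -1 * ((lam p - lam (p + (j : ℕ) + 1)) * b (p + (j : ℕ) + 1) p)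
    rw [vvec]; ring
  · rw [if_neg hi, if_neg hi, one_mul]
    simp only [Matrix.submatrix_apply, id_eq, finRotate_succ_apply]
    have hval : ((i + 1 : Fin (K + 1)) : ℕ) = (i : ℕ) + 1 :=
      Fin.val_add_one_of_lt (Fin.lt_last_iff_ne_last.mpr hi)
    simp only [Mmat, Amat, Matrix.of_apply, hval]
    have hne : ¬((i : ℕ) + 1 = 0) := by omega
    rw [if_neg hne]
    split_ifs <;> first | rfl | omega

lemma dp_eq_deltaInv (lam : ℕ → ℂ) (b : ℕ → ℕ → ℂ) (hmon : ∀ n, b n n = 1) (p k : ℕ) :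
    deltaInv lam b (p + k) k = dp lam b p k := by
  rcases k with _ | K
  · simp [deltaInv, dp]
  -- step 1 : deltaInv is (-1)^(K+1) * det (Mmat)
  have hdelta : deltaInv lam b (p + (K + 1)) (K + 1)
      = (-1 : ℂ) ^ (K + 1) * (Mmat lam b p K).det := by
    rw [deltaInv, if_neg (by omega), if_pos (by omega)]
    congr 1
    congr 1
    funext r j
    have hpk : p + (K + 1) - (K + 1) = p := by omega
    simp only [Mmat, Matrix.of_apply, hpk]
  -- step 2 : dp is the last cramer component
  set E := (Amat b p K).updateCol (Fin.last K) (vvec lam b p K) with hE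
  have hcram : dp lam b p (K + 1) = E.det := by
    have hAu := Amat_mulVec lam b p K
    have h2 : (Amat b p K).adjugate *ᵥ (Amat b p K *ᵥ
        (fun s : Fin (K + 1) => dp lam b p ((s : ℕ) + 1)))
        = (fun s : Fin (K + 1) => dp lam b p ((s : ℕ) + 1)) := by
      rw [Matrix.mulVec_mulVec, Matrix.adjugate_mul, Amat_det, one_smul, Matrix.one_mulVec]
    rw [hAu] at h2
    have h3 := congrFun h2 (Fin.last K)
    rw [← Matrix.cramer_eq_adjugate_mulVec, Matrix.cramer_apply] at h3
    simp only [Fin.val_last] at h3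
    rw [hE]
    exact h3.symm
  -- step 3 : det E = (-1)^(K+1) * det (Mmat)
  have hdetE : E.det = (-1 : ℂ) ^ (K + 1) * (Mmat lam b p K).det := by
    have h1 : E.det = Eᵀ.det := (Matrix.det_transpose E).symm
    rw [h1, hE, Emat_eq]
    rw [Matrix.det_mul_column]
    rw [Matrix.det_permute]
    have hsign : ((Equiv.Perm.sign (finRotate (K + 1)) : ℤ) : ℂ) = (-1 : ℂ) ^ K := by
      rw [sign_finRotate]; push_cast; ring
    have hprod : (∏ i : Fin (K + 1), (if i = Fin.last K then (-1 : ℂ) else 1)) = -1 := by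
      rw [Fintype.prod_eq_single (Fin.last K) (fun i hi => if_neg hi), if_pos rfl]
    rw [hprod, hsign]
    ring
  rw [hdelta, ← hdetE, hcram]
lemma masterCoeff (lam : ℕ → ℂ) (b : ℕ → ℕ → ℂ) (hmon : ∀ n, b n n = 1) (m K : ℕ) :
    ∑ k ∈ range (K + 1), b (m + K) (m + k) * deltaInv lam b (m + k) k
      = lam (m + K) * b (m + K) m := by
  have hd : ∀ k, deltaInv lam b (m + k) k = dp lam b m k :=
    fun k => dp_eq_deltaInv lam b hmon m k
  simp only [hd]
  cases K with
  | zero => simp [dp, hmon]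
  | succ K =>
    rw [Finset.sum_range_succ, Finset.sum_range_succ']
    have e1 : ∀ x, m + (x + 1) = m + x + 1 := fun x => by omega
    have e2 : m + (K + 1) = m + K + 1 := by omega
    simp only [e1, e2, add_zero, hmon (m + K + 1)]
    rw [one_mul, dp_succ]
    show (∑ x ∈ range K, b (m + K + 1) (m + x + 1) * dp lam b m (x + 1)) + _ + (_ - ∑ s ∈ range K, b (m + K + 1) (m + s + 1) * dp lam b m (s + 1)) = _
    rw [dp]
    ring
lemma sum_Icc_Icc_swap' {M : Type*} [AddCommMonoid M] (f : ℕ → ℕ → M) (k n : ℕ) :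
    ∑ i ∈ Icc k n, ∑ j ∈ Icc k i, f i j = ∑ j ∈ Icc k n, ∑ i ∈ Icc j n, f i j := by
  rw [Finset.sum_sigma', Finset.sum_sigma']
  apply Finset.sum_nbij' (fun p => ⟨p.2, p.1⟩) (fun p => ⟨p.2, p.1⟩) <;>
    simp only [Finset.mem_sigma, mem_Icc] <;> intros <;> first | omega | trivial

lemma range_succ_eq_Icc (n : ℕ) : range (n + 1) = Icc 0 n := by
  rw [← Finset.Ico_add_one_right_eq_Icc, Nat.Ico_zero_eq_range]

lemma Pn_coeff (b : ℕ → ℕ → ℂ) (n m : ℕ) :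
    (Pn b n).coeff m = if m ≤ n then b n m else 0 := by
  rw [Pn, Polynomial.finset_sum_coeff]
  have : ∀ i ∈ range (n + 1), (C (b n i) * X ^ i).coeff m = if m = i then b n i else 0 := by
    intro i _
    rw [Polynomial.coeff_C_mul, Polynomial.coeff_X_pow]
    split_ifs <;> simp
  rw [Finset.sum_congr rfl this, Finset.sum_ite_eq (range (n + 1)) m (fun i => b n i)]
  simp only [mem_range]
  split_ifs <;> first | rfl | omega

lemma aInvPoly_coeff (lam : ℕ → ℂ) (b : ℕ → ℕ → ℂ) (n k : ℕ) (hk : k ≤ n) :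
    (aInvPoly lam b n).coeff (n - k) = aInv lam b n k := by
  rw [aInvPoly, Polynomial.finset_sum_coeff]
  have : ∀ k' ∈ range (n + 1), (C (aInv lam b n k') * X ^ (n - k')).coeff (n - k)
      = if k' = k then aInv lam b n k' else 0 := by
    intro k' hk'
    simp only [mem_range] at hk'
    rw [Polynomial.coeff_C_mul, Polynomial.coeff_X_pow]
    by_cases h : k' = k
    · rw [if_pos (by omega), if_pos h, mul_one]
    · rw [if_neg (by omega), if_neg h, mul_zero]
  rw [Finset.sum_congr rfl this, Finset.sum_ite_eq' (range (n + 1)) k (fun k' => aInv lam b n k')]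
  rw [if_pos (by simp only [mem_range]; omega)]

lemma aInvPoly_eq_zero_of (lam : ℕ → ℂ) (b : ℕ → ℕ → ℂ) (n : ℕ)
    (h : ∀ k ≤ n, aInv lam b n k = 0) : aInvPoly lam b n = 0 := by
  rw [aInvPoly]
  apply Finset.sum_eq_zero
  intro k hk
  simp only [mem_range] at hk
  rw [h k (by omega), map_zero, zero_mul]
lemma LxPow (lam : ℕ → ℂ) (b : ℕ → ℕ → ℂ) (M j : ℕ) (hjM : j ≤ M) :
    ∑ i ∈ range (M + 1), aInvPoly lam b i * (C ((j.descFactorial i : ℕ) : ℂ) * X ^ (j - i))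
      = ∑ s ∈ range (j + 1), C (deltaInv lam b j s) * X ^ (j - s) := by
  have hexp : ∀ i, aInvPoly lam b i * (C ((j.descFactorial i : ℕ) : ℂ) * X ^ (j - i))
      = ∑ k ∈ range (i + 1),
          C (aInv lam b i k * ((j.descFactorial i : ℕ) : ℂ)) * X ^ ((i - k) + (j - i)) := by
    intro i
    rw [aInvPoly, Finset.sum_mul]
    apply Finset.sum_congr rfl
    intro k _
    rw [mul_mul_mul_comm, ← C_mul, ← pow_add]
  rw [Finset.sum_congr rfl (fun i _ => hexp i)]
  have hsub : ∑ i ∈ range (M + 1), ∑ k ∈ range (i + 1),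
        C (aInv lam b i k * ((j.descFactorial i : ℕ) : ℂ)) * X ^ ((i - k) + (j - i))
      = ∑ i ∈ range (j + 1), ∑ k ∈ range (i + 1),
        C (aInv lam b i k * ((j.descFactorial i : ℕ) : ℂ)) * X ^ ((i - k) + (j - i)) := by
    refine (Finset.sum_subset (by intro x hx; simp only [mem_range] at *; omega) ?_).symm
    intro i _ hi
    simp only [mem_range] at hi
    have : j.descFactorial i = 0 := Nat.descFactorial_eq_zero_iff_lt.mpr (by omega)
    rw [this]
    simp
  rw [hsub]
  have hnorm : ∀ i ∈ range (j + 1), ∀ k ∈ range (i + 1),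
      C (aInv lam b i k * ((j.descFactorial i : ℕ) : ℂ)) * X ^ ((i - k) + (j - i))
      = C (aInv lam b i k * ((j.descFactorial i : ℕ) : ℂ)) * X ^ (j - k) := by
    intro i hi k hk
    simp only [mem_range] at hi hk
    have he : (i - k) + (j - i) = j - k := by omega
    rw [he]
  rw [Finset.sum_congr rfl (fun i hi => Finset.sum_congr rfl (hnorm i hi))]
  rw [range_succ_eq_Icc]
  have : ∀ i ∈ Icc 0 j, ∑ k ∈ range (i + 1),
        C (aInv lam b i k * ((j.descFactorial i : ℕ) : ℂ)) * X ^ (j - k)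
      = ∑ k ∈ Icc 0 i,
        C (aInv lam b i k * ((j.descFactorial i : ℕ) : ℂ)) * X ^ (j - k) := by
    intro i _
    rw [range_succ_eq_Icc]
  rw [Finset.sum_congr rfl this, sum_Icc_Icc_swap']
  rw [← range_succ_eq_Icc]
  apply Finset.sum_congr rfl
  intro k hk
  simp only [mem_range] at hk
  rw [← Finset.sum_mul]
  have hsum : ∑ i ∈ Icc k j, C (aInv lam b i k * ((j.descFactorial i : ℕ) : ℂ))
      = C (deltaInv lam b j k) := by
    rw [← map_sum C, deltaInv_eq_sum_aInv lam b (show k ≤ j by omega)]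
    congr 1
    apply Finset.sum_congr rfl
    intro i _
    ring
  rw [hsum]

lemma masterPoly (lam : ℕ → ℂ) (b : ℕ → ℕ → ℂ) (hmon : ∀ n, b n n = 1) (n M : ℕ) (hnM : n ≤ M) :
    ∑ i ∈ range (M + 1), aInvPoly lam b i * (Polynomial.derivative^[i] (Pn b n))
      = C (lam n) * Pn b n := by
  have hder : ∀ i : ℕ, Polynomial.derivative^[i] (Pn b n)
      = ∑ j ∈ range (n + 1), C (b n j) * (C ((j.descFactorial i : ℕ) : ℂ) * X ^ (j - i)) := by
    intro i
    rw [Pn, Polynomial.iterate_derivative_sum]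
    apply Finset.sum_congr rfl
    intro j _
    rw [Polynomial.iterate_derivative_C_mul, Polynomial.iterate_derivative_X_pow_eq_C_mul]
  have hswap : ∑ i ∈ range (M + 1), aInvPoly lam b i * (Polynomial.derivative^[i] (Pn b n))
      = ∑ j ∈ range (n + 1), C (b n j) *
          (∑ i ∈ range (M + 1), aInvPoly lam b i * (C ((j.descFactorial i : ℕ) : ℂ) * X ^ (j - i))) := by
    rw [Finset.sum_congr rfl (fun i _ => by rw [hder i])]
    rw [Finset.sum_congr rfl (fun i _ => Finset.mul_sum _ _ _)]
    rw [Finset.sum_comm]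
    apply Finset.sum_congr rfl
    intro j _
    rw [Finset.mul_sum]
    apply Finset.sum_congr rfl
    intro i _
    ring
  rw [hswap]
  have hLx : ∀ j ∈ range (n + 1),
      C (b n j) * (∑ i ∈ range (M + 1), aInvPoly lam b i * (C ((j.descFactorial i : ℕ) : ℂ) * X ^ (j - i)))
      = C (b n j) * ∑ s ∈ range (j + 1), C (deltaInv lam b j s) * X ^ (j - s) := by
    intro j hj
    simp only [mem_range] at hj
    rw [LxPow lam b M j (by omega)]
  rw [Finset.sum_congr rfl hLx]
  -- now coefficientwise
  ext m
  rw [Polynomial.finset_sum_coeff]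
  have hinner : ∀ j ∈ range (n + 1),
      (C (b n j) * ∑ s ∈ range (j + 1), C (deltaInv lam b j s) * X ^ (j - s)).coeff m
      = if m ≤ j then b n j * deltaInv lam b j (j - m) else 0 := by
    intro j _
    rw [Polynomial.coeff_C_mul, Polynomial.finset_sum_coeff]
    have hterm : ∀ s ∈ range (j + 1), (C (deltaInv lam b j s) * X ^ (j - s)).coeff m
        = if m ≤ j then (if s = j - m then deltaInv lam b j s else 0) else 0 := by
      intro s hs
      simp only [mem_range] at hs
      rw [Polynomial.coeff_C_mul, Polynomial.coeff_X_pow]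
      by_cases hmj : m ≤ j
      · rw [if_pos hmj]
        by_cases hsm : s = j - m
        · rw [if_pos (by omega), if_pos hsm, mul_one]
        · rw [if_neg (by omega), if_neg hsm, mul_zero]
      · rw [if_neg hmj, if_neg (by omega), mul_zero]
    rw [Finset.sum_congr rfl hterm]
    by_cases hmj : m ≤ j
    · simp only [if_pos hmj]
      rw [Finset.sum_ite_eq' (range (j + 1)) (j - m) (fun s => deltaInv lam b j s)]
      rw [if_pos (by simp only [mem_range]; omega)]
    · simp only [if_neg hmj, Finset.sum_const_zero, mul_zero]
  rw [Finset.sum_congr rfl hinner]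
  rw [Polynomial.coeff_C_mul, Pn_coeff]
  by_cases hmn : m ≤ n
  · have hstep : ∑ j ∈ range (n + 1), (if m ≤ j then b n j * deltaInv lam b j (j - m) else 0)
        = ∑ j ∈ Icc m n, b n j * deltaInv lam b j (j - m) := by
      rw [range_succ_eq_Icc]
      rw [← Finset.sum_filter]
      congr 1
      ext j
      simp only [Finset.mem_filter, mem_Icc]
      omega
    rw [hstep, sum_Icc_eq_sum_range']
    have e1 : n + 1 - m = (n - m) + 1 := by omega
    rw [e1]
    have hterm2 : ∀ t ∈ range ((n - m) + 1),
        b n (m + t) * deltaInv lam b (m + t) (m + t - m)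
        = b n (m + t) * deltaInv lam b (m + t) t := by
      intro t _
      congr 2
      omega
    rw [Finset.sum_congr rfl hterm2]
    have := masterCoeff lam b hmon m (n - m)
    have e2 : m + (n - m) = n := by omega
    rw [e2] at this
    rw [this, if_pos hmn]
  · rw [if_neg hmn, mul_zero]
    apply Finset.sum_eq_zero
    intro j hj
    simp only [mem_range] at hj
    rw [if_neg (by omega)]
lemma choose_alt_id (n j N : ℕ) (hjN : j ≤ N) (hNn : N < n) :
    ∑ i ∈ Icc j N, (-1 : ℂ) ^ (i - j) * (n.choose i : ℂ) * (i.choose j : ℂ)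
      = (-1 : ℂ) ^ (N - j) * (n.choose j : ℂ) * ((n - j - 1).choose (N - j) : ℂ) := by
  have key : ∀ i ∈ Icc j N, (-1 : ℂ) ^ (i - j) * (n.choose i : ℂ) * (i.choose j : ℂ)
      = (n.choose j : ℂ) * ((-1 : ℂ) ^ (i - j) * (((n - j).choose (i - j) : ℕ) : ℂ)) := by
    intro i hi
    simp only [mem_Icc] at hi
    have h := Nat.choose_mul (n := n) (k := i) (s := j) hi.1
    have hc : ((n.choose i : ℕ) : ℂ) * ((i.choose j : ℕ) : ℂ)
        = ((n.choose j : ℕ) : ℂ) * (((n - j).choose (i - j) : ℕ) : ℂ) := by exact_mod_cast h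
    linear_combination (-1 : ℂ) ^ (i - j) * hc
  rw [Finset.sum_congr rfl key, ← Finset.mul_sum, sum_Icc_eq_sum_range']
  have hre : ∀ t ∈ range (N + 1 - j), (-1 : ℂ) ^ (j + t - j) * (((n - j).choose (j + t - j) : ℕ) : ℂ)
      = (-1 : ℂ) ^ t * (((n - j).choose t : ℕ) : ℂ) := by
    intro t _; rw [Nat.add_sub_cancel_left]
  rw [Finset.sum_congr rfl hre]
  have e1 : N + 1 - j = (N - j) + 1 := by omega
  rw [e1, alt_sum_choose_partial (n - j) (N - j) (by omega)]
  ring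

lemma inner_vanish (n N j : ℕ) (hjN : j ≤ N) (hNn : N < n) :
    ∑ i ∈ Icc (N + 1) n, (n.choose i : ℂ) * (-1 : ℂ) ^ (n - i) *
        ((-1 : ℂ) ^ (N - j) * (i.choose j : ℂ) * ((i - j - 1).choose (N - j) : ℂ))
      = -((n.choose j : ℂ) * (-1 : ℂ) ^ (n - j)) := by
  have key : ∀ i ∈ Icc (N + 1) n, (n.choose i : ℂ) * (-1 : ℂ) ^ (n - i) *
        ((-1 : ℂ) ^ (N - j) * (i.choose j : ℂ) * ((i - j - 1).choose (N - j) : ℂ))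
      = ((-1 : ℂ) ^ (N - j) * (-1 : ℂ) ^ (n - j) * (n.choose j : ℂ)) *
          ((-1 : ℂ) ^ (i - j) * ((n - j).choose (i - j) : ℂ) * ((i - j - 1).choose (N - j) : ℂ)) := by
    intro i hi
    simp only [mem_Icc] at hi
    have h := Nat.choose_mul (n := n) (k := i) (s := j) (by omega)
    have hc : ((n.choose i : ℕ) : ℂ) * ((i.choose j : ℕ) : ℂ)
        = ((n.choose j : ℕ) : ℂ) * (((n - j).choose (i - j) : ℕ) : ℂ) := by exact_mod_cast h
    have hs : (-1 : ℂ) ^ (n - j) * (-1 : ℂ) ^ (i - j) = (-1 : ℂ) ^ (n - i) := by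
      rw [← pow_add]
      have e : n - j + (i - j) = (n - i) + 2 * (i - j) := by omega
      rw [e, pow_add, pow_mul]
      norm_num
    linear_combination ((-1 : ℂ) ^ (N - j) * ((i - j - 1).choose (N - j) : ℂ) * (-1 : ℂ) ^ (n - i)) * hc
      - ((-1 : ℂ) ^ (N - j) * ((i - j - 1).choose (N - j) : ℂ) *
          ((n.choose j : ℂ) * ((n - j).choose (i - j) : ℂ))) * hs
  rw [Finset.sum_congr rfl key, ← Finset.mul_sum]
  have hbij : ∑ i ∈ Icc (N + 1) n,
      ((-1 : ℂ) ^ (i - j) * ((n - j).choose (i - j) : ℂ) * ((i - j - 1).choose (N - j) : ℂ))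
      = ∑ t ∈ Icc ((N - j) + 1) (n - j),
      ((-1 : ℂ) ^ t * ((n - j).choose t : ℂ) * ((t - 1).choose (N - j) : ℂ)) := by
    apply Finset.sum_nbij' (fun i => i - j) (fun t => t + j) <;>
      simp only [mem_Icc] <;> intros <;> first | omega | trivial
  rw [hbij, alt_sum_E2 (N - j) (n - j) (by omega)]
  have hsq : (-1 : ℂ) ^ (N - j) * (-1 : ℂ) ^ (N - j) = 1 := by
    rw [← pow_add, ← two_mul, pow_mul]
    norm_num
  calc ((-1 : ℂ) ^ (N - j) * (-1 : ℂ) ^ (n - j) * (n.choose j : ℂ)) * (-1 : ℂ) ^ ((N - j) + 1)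
      = ((-1 : ℂ) ^ (N - j) * (-1 : ℂ) ^ (N - j)) * (-((n.choose j : ℂ) * (-1 : ℂ) ^ (n - j))) := by
        ring
    _ = -((n.choose j : ℂ) * (-1 : ℂ) ^ (n - j)) := by rw [hsq, one_mul]
lemma descFactorial_mul_aInv (lam : ℕ → ℂ) (b : ℕ → ℕ → ℂ) (n i k : ℕ) :
    (n.descFactorial i : ℂ) * aInv lam b i k
      = (n.choose i : ℂ) *
          ∑ j ∈ Icc k i, (i.choose j : ℂ) * (-1 : ℂ) ^ (i - j) * deltaInv lam b j k := by
  rw [aInv]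
  have hdf : (n.descFactorial i : ℂ) = (i.factorial : ℂ) * (n.choose i : ℂ) := by
    exact_mod_cast congrArg (fun z : ℕ => (z : ℂ)) (Nat.descFactorial_eq_factorial_mul_choose n i)
  have hfne : (i.factorial : ℂ) ≠ 0 := by exact_mod_cast i.factorial_ne_zero
  rw [hdf]
  field_simp

theorem stmt14 (N : ℕ) (lam : ℕ → ℂ) (b : ℕ → ℕ → ℂ) (hmon : ∀ n, b n n = 1) :
    ((∀ i, N < i → aInvPoly lam b i = 0) ∧
      (∀ n, ∑ i ∈ range (N + 1),
          aInvPoly lam b i * (Polynomial.derivative^[i] (Pn b n)) = C (lam n) * Pn b n)) ↔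
    ((∀ n, N + 1 ≤ n → ∀ k ≤ N,
        deltaInv lam b n k = ∑ i ∈ Icc k N,
          (-1 : ℂ) ^ (N - i) * (n.choose i : ℂ) * ((n - i - 1).choose (N - i) : ℂ) *
            deltaInv lam b i k) ∧
      (∀ n k : ℕ, N < k → k ≤ n → deltaInv lam b n k = 0)) := by
  constructor
  · rintro ⟨hvan, -⟩
    have haz : ∀ i, N < i → ∀ k, k ≤ i → aInv lam b i k = 0 := by
      intro i hi k hk
      rw [← aInvPoly_coeff lam b i k hk, hvan i hi, Polynomial.coeff_zero]
    constructor
    · intro n hn k hk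
      rw [deltaInv_eq_sum_aInv lam b (show k ≤ n by omega)]
      have hshrink : ∑ i ∈ Icc k n, (n.descFactorial i : ℂ) * aInv lam b i k
          = ∑ i ∈ Icc k N, (n.descFactorial i : ℂ) * aInv lam b i k := by
        refine (Finset.sum_subset (by intro x; simp only [mem_Icc]; omega) ?_).symm
        intro i hi hni
        simp only [mem_Icc] at hi hni
        rw [haz i (by omega) k (by omega), mul_zero]
      rw [hshrink]
      have hsub : ∀ i ∈ Icc k N, (n.descFactorial i : ℂ) * aInv lam b i k
          = ∑ j ∈ Icc k i,
              ((-1 : ℂ) ^ (i - j) * (n.choose i : ℂ) * (i.choose j : ℂ)) * deltaInv lam b j k := by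
        intro i _
        rw [descFactorial_mul_aInv, Finset.mul_sum]
        apply Finset.sum_congr rfl
        intro j _
        ring
      rw [Finset.sum_congr rfl hsub, sum_Icc_Icc_swap']
      apply Finset.sum_congr rfl
      intro j hj
      simp only [mem_Icc] at hj
      rw [← Finset.sum_mul, choose_alt_id n j N hj.2 (by omega)]
    · intro n k hNk hkn
      rw [deltaInv_eq_sum_aInv lam b hkn]
      apply Finset.sum_eq_zero
      intro i hi
      simp only [mem_Icc] at hi
      rw [haz i (by omega) k (by omega), mul_zero]
  · rintro ⟨hA, hB⟩
    have hvan : ∀ i, N < i → aInvPoly lam b i = 0 := by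
      intro n hn
      apply aInvPoly_eq_zero_of
      intro k hk
      rw [aInv]
      have hzero : ∑ i ∈ Icc k n, (n.choose i : ℂ) * (-1 : ℂ) ^ (n - i) * deltaInv lam b i k
          = 0 := by
        by_cases hkN : N < k
        · apply Finset.sum_eq_zero
          intro i hi
          simp only [mem_Icc] at hi
          rw [hB i k hkN (by omega), mul_zero]
        · push_neg at hkN
          have hsplit : ∑ i ∈ Icc k n, (n.choose i : ℂ) * (-1 : ℂ) ^ (n - i) * deltaInv lam b i k
              = (∑ i ∈ Icc k N, (n.choose i : ℂ) * (-1 : ℂ) ^ (n - i) * deltaInv lam b i k)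
                + ∑ i ∈ Icc (N + 1) n, (n.choose i : ℂ) * (-1 : ℂ) ^ (n - i) * deltaInv lam b i k := by
            rw [← Finset.Ico_add_one_right_eq_Icc, ← Finset.Ico_add_one_right_eq_Icc, ← Finset.Ico_add_one_right_eq_Icc]
            rw [Finset.sum_Ico_consecutive _ (show k ≤ N + 1 by omega) (show N + 1 ≤ n + 1 by omega)]
          rw [hsplit]
          have hsecond : ∑ i ∈ Icc (N + 1) n, (n.choose i : ℂ) * (-1 : ℂ) ^ (n - i) * deltaInv lam b i k
              = ∑ j ∈ Icc k N,
                  (-((n.choose j : ℂ) * (-1 : ℂ) ^ (n - j))) * deltaInv lam b j k := by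
            have hterm : ∀ i ∈ Icc (N + 1) n,
                (n.choose i : ℂ) * (-1 : ℂ) ^ (n - i) * deltaInv lam b i k
                = ∑ j ∈ Icc k N, ((n.choose i : ℂ) * (-1 : ℂ) ^ (n - i) *
                    ((-1 : ℂ) ^ (N - j) * (i.choose j : ℂ) * ((i - j - 1).choose (N - j) : ℂ)))
                    * deltaInv lam b j k := by
              intro i hi
              simp only [mem_Icc] at hi
              rw [hA i (by omega) k hkN, Finset.mul_sum]
              apply Finset.sum_congr rfl
              intro j _
              ring
            rw [Finset.sum_congr rfl hterm, Finset.sum_comm]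
            apply Finset.sum_congr rfl
            intro j hj
            simp only [mem_Icc] at hj
            rw [← Finset.sum_mul, inner_vanish n N j hj.2 (by omega)]
          rw [hsecond, ← Finset.sum_add_distrib]
          apply Finset.sum_eq_zero
          intro j _
          ring
      rw [hzero, mul_zero]
    refine ⟨hvan, fun n => ?_⟩
    rcases le_or_gt n N with h | h
    · exact masterPoly lam b hmon n N h
    · rw [← masterPoly lam b hmon n n le_rfl]
      refine Finset.sum_subset (by intro x; simp only [mem_range]; omega) ?_
      intro i hi hni
      simp only [mem_range] at hi hni
      rw [hvan i (by omega), zero_mul]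
end

section
/- For all natural numbers N, n, ℓ with ℓ ≤ N ≤ n, one has C(n+1, ℓ) · (−1)^{n−ℓ} + ∑_{i=N+1}^{n} C(n+1, i) · C(i, ℓ) · C(i−ℓ−1, N−ℓ) · (−1)^{(N−ℓ)+(n−i)} = (−1)^{N−ℓ} · C(n+1, ℓ) · C(n−ℓ, N−ℓ). -/
open Finset

lemma altA (m d : ℕ) (hd : d ≠ 0) :
    ∑ j ∈ Finset.Icc m (m + d), (-1 : ℤ) ^ j * ((m + d).choose j) * (j.choose m) = 0 := by
  have hmap : (Finset.Icc 0 d).map (addRightEmbedding m) = Finset.Icc m (m + d) := by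
    rw [Finset.map_add_right_Icc]; simp [Nat.add_comm]
  rw [← hmap, Finset.sum_map]
  have key : ∀ t ∈ Finset.Icc 0 d,
      (-1 : ℤ) ^ (addRightEmbedding m t) * (((m + d).choose (addRightEmbedding m t)) : ℤ) *
        (((addRightEmbedding m t).choose m) : ℤ)
      = ((-1 : ℤ) ^ m * ((m + d).choose m)) * ((-1 : ℤ) ^ t * (d.choose t)) := by
    intro t ht
    simp only [addRightEmbedding, Function.Embedding.coeFn_mk]
    have h1 : (m + d).choose (t + m) * (t + m).choose m
        = (m + d).choose m * (m + d - m).choose (t + m - m) :=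
      Nat.choose_mul (by omega)
    have h2 : m + d - m = d := by omega
    have h3 : t + m - m = t := by omega
    rw [h2, h3] at h1
    have h1' : ((m + d).choose (t + m) : ℤ) * ((t + m).choose m : ℤ)
        = ((m + d).choose m : ℤ) * (d.choose t : ℤ) := by exact_mod_cast congrArg Nat.cast h1
    rw [pow_add]
    linear_combination ((-1 : ℤ) ^ t * (-1) ^ m) * h1'
  rw [Finset.sum_congr rfl key, ← Finset.mul_sum]
  have : ∑ t ∈ Finset.Icc 0 d, (-1 : ℤ) ^ t * (d.choose t) = 0 := by
    have hr : Finset.Icc 0 d = Finset.range (d + 1) := by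
      ext x; simp [Nat.lt_succ_iff]
    rw [hr]
    simpa using Int.alternating_sum_range_choose_of_ne hd
  rw [this, mul_zero]

lemma altA' (m n : ℕ) (h : m < n) :
    ∑ j ∈ Finset.Icc m n, (-1 : ℤ) ^ j * (n.choose j) * (j.choose m) = 0 := by
  have h2 : n = m + (n - m) := by omega
  rw [h2] at *
  exact altA m (n - m) (by omega)

lemma keyB (m k : ℕ) (h : m ≤ k) :
    ∑ j ∈ Finset.Icc (m + 1) (k + 1),
      (-1 : ℤ) ^ j * ((k + 1).choose j) * ((j - 1).choose m) = (-1) ^ (m + 1) := by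
  induction k, h using Nat.le_induction with
  | base => simp
  | succ k hk ih =>
    have hstep : ∑ j ∈ Finset.Icc (m + 1) (k + 2),
        (-1 : ℤ) ^ j * ((k + 2).choose j) * ((j - 1).choose m)
        = (∑ j ∈ Finset.Icc (m + 1) (k + 2),
            (-1 : ℤ) ^ j * ((k + 1).choose j) * ((j - 1).choose m))
          + ∑ j ∈ Finset.Icc (m + 1) (k + 2),
            (-1 : ℤ) ^ j * ((k + 1).choose (j - 1)) * ((j - 1).choose m) := by
      rw [← Finset.sum_add_distrib]
      apply Finset.sum_congr rfl
      intro j hj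
      simp only [Finset.mem_Icc] at hj
      obtain ⟨j, rfl⟩ : ∃ j', j = j' + 1 := ⟨j - 1, by omega⟩
      rw [Nat.choose_succ_succ' (k + 1) j]
      push_cast [Nat.add_sub_cancel]
      ring
    rw [hstep]
    have hA : ∑ j ∈ Finset.Icc (m + 1) (k + 2),
        (-1 : ℤ) ^ j * ((k + 1).choose j) * ((j - 1).choose m) = (-1) ^ (m + 1) := by
      rw [Finset.sum_Icc_succ_top (by omega)]
      rw [ih]
      simp [Nat.choose_eq_zero_of_lt (by omega : k + 1 < k + 2)]
    have hB : ∑ j ∈ Finset.Icc (m + 1) (k + 2),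
        (-1 : ℤ) ^ j * ((k + 1).choose (j - 1)) * ((j - 1).choose m) = 0 := by
      have hmap : (Finset.Icc m (k + 1)).map (addRightEmbedding 1)
          = Finset.Icc (m + 1) (k + 2) := by
        rw [Finset.map_add_right_Icc]
      rw [← hmap, Finset.sum_map]
      have key : ∀ t ∈ Finset.Icc m (k + 1),
          (-1 : ℤ) ^ (addRightEmbedding 1 t) *
            (((k + 1).choose (addRightEmbedding 1 t - 1)) : ℤ) *
            (((addRightEmbedding 1 t - 1).choose m) : ℤ)
          = -((-1 : ℤ) ^ t * ((k + 1).choose t) * (t.choose m)) := by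
        intro t _
        simp only [addRightEmbedding, Function.Embedding.coeFn_mk, Nat.add_sub_cancel]
        rw [pow_succ]; ring
      rw [Finset.sum_congr rfl key, Finset.sum_neg_distrib,
        altA' m (k + 1) (by omega), neg_zero]
    rw [hA, hB, add_zero]

theorem stmt17 (N n l : ℕ) (h1 : l ≤ N) (h2 : N ≤ n) :
    ((n + 1).choose l : ℤ) * (-1) ^ (n - l) +
      ∑ i ∈ Finset.Icc (N + 1) n,
        ((n + 1).choose i : ℤ) * (i.choose l : ℤ) * ((i - l - 1).choose (N - l) : ℤ) *
          (-1) ^ ((N - l) + (n - i)) =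
      (-1) ^ (N - l) * ((n + 1).choose l : ℤ) * ((n - l).choose (N - l) : ℤ) := by
  set m := N - l with hm
  set k := n - l with hk
  have hmk : m ≤ k := by omega
  have hkey := keyB m k hmk
  rw [Finset.sum_Icc_succ_top (by omega)] at hkey
  have hself : ((k + 1).choose (k + 1) : ℤ) = 1 := by simp
  have hsub : ∑ j ∈ Finset.Icc (m + 1) k,
      (-1 : ℤ) ^ j * ((k + 1).choose j) * ((j - 1).choose m)
      = (-1) ^ (m + 1) - (-1) ^ (k + 1) * (k.choose m) := by
    rw [hself] at hkey
    simp only [Nat.add_sub_cancel] at hkey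
    linarith [hkey]
  have hmap : (Finset.Icc (m + 1) k).map (addRightEmbedding l) = Finset.Icc (N + 1) n := by
    rw [Finset.map_add_right_Icc]
    congr 1 <;> omega
  have hmain : ∑ i ∈ Finset.Icc (N + 1) n,
      ((n + 1).choose i : ℤ) * (i.choose l : ℤ) * ((i - l - 1).choose m : ℤ) *
        (-1) ^ (m + (n - i))
      = ((n + 1).choose l : ℤ) * ((-1) ^ (m + k) *
          ∑ j ∈ Finset.Icc (m + 1) k,
            (-1 : ℤ) ^ j * ((k + 1).choose j) * ((j - 1).choose m)) := by
    rw [← hmap, Finset.sum_map, Finset.mul_sum, Finset.mul_sum]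
    apply Finset.sum_congr rfl
    intro j hj
    simp only [Finset.mem_Icc] at hj
    simp only [addRightEmbedding, Function.Embedding.coeFn_mk]
    have e1 : j + l - l - 1 = j - 1 := by omega
    have e2 : n - (j + l) = k - j := by omega
    have e3 : (n + 1).choose (j + l) * (j + l).choose l
        = (n + 1).choose l * (k + 1).choose j := by
      have h5 := Nat.choose_mul (n := n + 1) (k := j + l) (s := l) (by omega)
      have e4 : n + 1 - l = k + 1 := by omega
      have e5 : j + l - l = j := by omega
      rw [e4, e5] at h5
      exact h5
    have e3' : ((n + 1).choose (j + l) : ℤ) * ((j + l).choose l : ℤ)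
        = ((n + 1).choose l : ℤ) * ((k + 1).choose j : ℤ) := by
      exact_mod_cast congrArg Nat.cast e3
    have hkj : (-1 : ℤ) ^ (k - j) * (-1) ^ j = (-1) ^ k := by
      rw [← pow_add]; congr 1; omega
    have hsq : ((-1 : ℤ) ^ j) * ((-1 : ℤ) ^ j) = 1 := by
      rw [← pow_add, ← two_mul, pow_mul]; norm_num
    have esign : (-1 : ℤ) ^ (m + (k - j)) = (-1) ^ (m + k) * (-1) ^ j := by
      rw [pow_add, pow_add]
      linear_combination (-(-1 : ℤ) ^ m * (-1) ^ (k - j)) * hsq + ((-1 : ℤ) ^ m * (-1) ^ j) * hkj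
    rw [e1, e2, esign]
    linear_combination (((j - 1).choose m : ℤ) * ((-1) ^ (m + k) * (-1) ^ j)) * e3'
  rw [hmain, hsub]
  have hsq : ((-1 : ℤ) ^ m) * ((-1 : ℤ) ^ m) = 1 := by
    rw [← pow_add, ← two_mul, pow_mul]; norm_num
  have hsqk : ((-1 : ℤ) ^ k) * ((-1 : ℤ) ^ k) = 1 := by
    rw [← pow_add, ← two_mul, pow_mul]; norm_num
  simp only [pow_add, pow_succ, pow_one]
  linear_combination (-((n + 1).choose l : ℤ) * (-1) ^ k) * hsq +
    (((n + 1).choose l : ℤ) * (-1) ^ m * (k.choose m : ℤ)) * hsqk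
end

section
/- For all natural numbers N, n, ℓ with ℓ ≤ N and n ≥ N+1, one has ∑_{i=N+1}^{n} (−1)^{i−N} / ( (i−ℓ) · (n−i)! · (i−N−1)! ) = − (N−ℓ)! / (n−ℓ)!. -/
open Finset


noncomputable def TT (M k : ℕ) : ℚ :=
  ∑ j ∈ Finset.range (M + 1), (-1 : ℚ) ^ j * (M.choose j) / ((j : ℚ) + k + 1)

lemma TT_rec (M k : ℕ) : TT (M + 1) k = TT M k - TT M (k + 1) := by
  have hA : TT (M+1) k
      = ∑ j ∈ Finset.range (M + 1), (-1 : ℚ) ^ (j+1) * (((M+1).choose (j+1) : ℕ)) / ((j+1 : ℕ) + k + 1)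
        + (-1:ℚ)^0 * (((M+1).choose 0 : ℕ)) / ((0:ℕ) + k + 1) :=
    Finset.sum_range_succ' _ _
  have hB : ∑ j ∈ Finset.range (M + 1 + 1), (-1 : ℚ) ^ j * (M.choose j) / ((j:ℚ) + k + 1)
      = ∑ j ∈ Finset.range (M + 1), (-1 : ℚ) ^ (j+1) * ((M.choose (j+1) : ℕ)) / ((j+1 : ℕ) + k + 1)
        + (-1:ℚ)^0 * ((M.choose 0 : ℕ)) / ((0:ℕ) + k + 1) :=
    Finset.sum_range_succ' _ _
  have hC : ∑ j ∈ Finset.range (M + 1 + 1), (-1 : ℚ) ^ j * (M.choose j) / ((j:ℚ) + k + 1)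
      = TT M k := by
    unfold TT
    rw [Finset.sum_range_succ]
    simp [Nat.choose_succ_self]
  rw [hA]
  have hsplit : ∀ j ∈ Finset.range (M+1),
      (-1 : ℚ) ^ (j+1) * (((M+1).choose (j+1) : ℕ)) / ((j+1 : ℕ) + k + 1)
      = (-1 : ℚ) ^ (j+1) * ((M.choose j : ℕ)) / ((j+1 : ℕ) + k + 1)
        + (-1 : ℚ) ^ (j+1) * ((M.choose (j+1) : ℕ)) / ((j+1 : ℕ) + k + 1) := by
    intro j _
    rw [Nat.choose_succ_succ]
    push_cast
    ring
  rw [Finset.sum_congr rfl hsplit, Finset.sum_add_distrib]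
  have h1 : ∑ j ∈ Finset.range (M+1), (-1 : ℚ) ^ (j+1) * ((M.choose j : ℕ)) / ((j+1 : ℕ) + k + 1)
      = - TT M (k+1) := by
    unfold TT
    rw [← Finset.sum_neg_distrib]
    apply Finset.sum_congr rfl
    intro j _
    push_cast
    ring_nf
  have h2 : ∑ j ∈ Finset.range (M+1), (-1 : ℚ) ^ (j+1) * ((M.choose (j+1) : ℕ)) / ((j+1 : ℕ) + k + 1)
      = TT M k - (-1:ℚ)^0 * ((M.choose 0 : ℕ)) / ((0:ℕ) + k + 1) := by
    rw [← hC, hB]; ring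
  rw [h1, h2]
  simp [Nat.choose_zero_right]
  ring


lemma TT_closed (M : ℕ) : ∀ k : ℕ,
    TT M k = (M.factorial : ℚ) * k.factorial / (M + k + 1).factorial := by
  induction M with
  | zero =>
    intro k
    unfold TT
    rw [Finset.sum_range_one]
    have hk : ((k.factorial : ℚ)) ≠ 0 := by exact_mod_cast (Nat.factorial_pos k).ne'
    have hk1 : ((k : ℚ) + 1) ≠ 0 := by positivity
    simp only [Nat.factorial_succ, Nat.zero_add, Nat.factorial_zero, Nat.choose_zero_right,
      Nat.cast_one, pow_zero]
    push_cast
    field_simp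
    ring
  | succ M ih =>
    intro k
    rw [TT_rec, ih k, ih (k+1)]
    have hM : ((M.factorial : ℚ)) ≠ 0 := by exact_mod_cast (Nat.factorial_pos M).ne'
    have h2 : (((M + k + 1).factorial : ℚ)) ≠ 0 := by exact_mod_cast (Nat.factorial_pos _).ne'
    have e1 : (M + 1 + k + 1) = (M + k + 1) + 1 := by ring
    have e2 : (M + (k+1) + 1) = (M + k + 1) + 1 := by ring
    have hf2 : ((((M+k+1)+1).factorial : ℚ)) = ((M:ℚ)+k+2) * ((M+k+1).factorial : ℚ) := by
      rw [Nat.factorial_succ]; push_cast; ring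
    have hk : (((k+1).factorial : ℚ)) = ((k:ℚ)+1) * k.factorial := by
      rw [Nat.factorial_succ]; push_cast; ring
    have hm : (((M+1).factorial : ℚ)) = ((M:ℚ)+1) * M.factorial := by
      rw [Nat.factorial_succ]; push_cast; ring
    have hd : ((M:ℚ)+k+2) ≠ 0 := by positivity
    rw [e1, e2, hf2, hk, hm]
    push_cast
    field_simp
    ring

theorem stmt18 (N n l : ℕ) (h1 : l ≤ N) (h2 : N + 1 ≤ n) :
    ∑ i ∈ Finset.Icc (N + 1) n,
        (-1 : ℚ) ^ (i - N) / (((i - l : ℕ) : ℚ) * ((n - i).factorial : ℚ) * ((i - N - 1).factorial : ℚ)) =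
      -(((N - l).factorial : ℚ) / ((n - l).factorial : ℚ)) := by
  obtain ⟨M, rfl⟩ : ∃ M, n = N + 1 + M := ⟨n - (N+1), by omega⟩
  set k := N - l with hk
  rw [← Finset.Ico_add_one_right_eq_Icc, Finset.sum_Ico_eq_sum_range]
  have hrange : N + 1 + M + 1 - (N + 1) = M + 1 := by omega
  rw [hrange]
  have hterm : ∀ j ∈ Finset.range (M+1),
      (-1:ℚ)^((N+1+j) - N) / ((((N+1+j) - l : ℕ):ℚ) * ((((N+1+M) - (N+1+j)).factorial : ℕ):ℚ) * ((((N+1+j) - N - 1).factorial : ℕ):ℚ))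
        = -((-1:ℚ)^j * (M.choose j) / ((j:ℚ)+k+1)) / (M.factorial : ℚ) := by
    intro j hj
    rw [Finset.mem_range] at hj
    have e1 : (N+1+j) - N = j + 1 := by omega
    have e2 : (N+1+j) - l = j + k + 1 := by omega
    have e3 : (N+1+M) - (N+1+j) = M - j := by omega
    have e4 : (N+1+j) - N - 1 = j := by omega
    rw [e2, e3, e4, e1]
    have hchoose : ((M.choose j : ℕ) : ℚ) * j.factorial * (M-j).factorial = M.factorial := by
      exact_mod_cast congrArg (Nat.cast (R := ℚ)) (Nat.choose_mul_factorial_mul_factorial (by omega : j ≤ M))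
    have hj1 : (((j:ℚ)) + k + 1) ≠ 0 := by positivity
    have hf1 : (((M-j).factorial : ℚ)) ≠ 0 := by exact_mod_cast (Nat.factorial_pos _).ne'
    have hf2 : ((j.factorial : ℚ)) ≠ 0 := by exact_mod_cast (Nat.factorial_pos _).ne'
    have hf3 : ((M.factorial : ℚ)) ≠ 0 := by exact_mod_cast (Nat.factorial_pos _).ne'
    push_cast
    field_simp
    linear_combination ((-1:ℚ)^j) * hchoose
  rw [Finset.sum_congr rfl hterm]
  have : ∑ j ∈ Finset.range (M+1), -((-1:ℚ)^j * (M.choose j) / ((j:ℚ)+k+1)) / (M.factorial : ℚ)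
      = -(TT M k) / (M.factorial : ℚ) := by
    unfold TT
    rw [← Finset.sum_div, ← Finset.sum_neg_distrib]
  rw [this, TT_closed]
  have e5 : (N+1+M) - l = M + k + 1 := by omega
  rw [e5]
  have hf3 : ((M.factorial : ℚ)) ≠ 0 := by exact_mod_cast (Nat.factorial_pos _).ne'
  have hf4 : (((M+k+1).factorial : ℚ)) ≠ 0 := by exact_mod_cast (Nat.factorial_pos _).ne'
  field_simp
end

section
/- For all natural numbers t, N, s with s ≤ N ≤ t, one has ∑_{j=s}^{N} C(t+1, j) · C(j, s) · (−1)^{j−s} = (−1)^{N−s} · C(t+1, s) · C(t−s, t−N). -/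
lemma aux19 (t N s : ℕ) (h1 : s ≤ N) (h2 : N + 1 ≤ t) :
    (t+1).choose (N+1) * (N+1).choose s
      = (t+1).choose s * ((t-s).choose (t-N-1) + (t-s).choose (t-N)) := by
  rw [Nat.choose_mul (n := t+1) (by omega : s ≤ N+1)]
  congr 1
  have e1 : t + 1 - s = (t - s) + 1 := by omega
  have e2 : t - N = (t - N - 1) + 1 := by omega
  rw [e1, Nat.choose_symm_of_eq_add (by omega : t - s + 1 = (N + 1 - s) + (t - N)), e2,
    Nat.choose_succ_succ']
  simp

theorem stmt19 (t N s : ℕ) (h1 : s ≤ N) (h2 : N ≤ t) :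
    ∑ j ∈ Finset.Icc s N, ((t + 1).choose j : ℤ) * (j.choose s : ℤ) * (-1) ^ (j - s) =
      (-1) ^ (N - s) * ((t + 1).choose s : ℤ) * ((t - s).choose (t - N) : ℤ) := by
  induction N, h1 using Nat.le_induction with
  | base =>
    simp [Nat.choose_symm (by omega : s ≤ t)]
  | succ N h1 ih =>
    rw [Finset.sum_Icc_succ_top (by omega : s ≤ N + 1), ih (by omega)]
    have key := aux19 t N s h1 h2
    have key' : ((t+1).choose (N+1) : ℤ) * ((N+1).choose s : ℤ)
        = ((t+1).choose s : ℤ) * (((t-s).choose (t-N-1) : ℤ) + ((t-s).choose (t-N) : ℤ)) := by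
      exact_mod_cast key
    have hp : ((-1 : ℤ))^(N+1-s) = -(-1:ℤ)^(N-s) := by
      rw [show N+1-s = (N-s)+1 from by omega]; ring
    have e3 : t - (N+1) = t - N - 1 := by omega
    rw [hp, e3]
    linear_combination (-(-1:ℤ)^(N-s)) * key'
end
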